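/- arXiv:1509.05263 — 15 statements merged into one kernel-verified Lean document; each statement's English description precedes it below -/
import Mathlib

section
/- Let π be a representation of a group G on a Banach space X. If the subspace X*_π̄ + Ann(X**_π̿) is weak-* dense in X*, where π̿ denotes the dual representation of π̄ on X**, then X_π ∩ Ann(X*_π̄) = {0}. -/
/-- Let `π` be a representation of a group `G` on a Banach space `X`.
If the subspace `X*_π̄ + Ann(X**_π̿)` is weak-* dense in `X*` (where `π̄` is the dual
representation on `X*`, given by `(π̄ g f) x = f (π g⁻¹ x)`, and `π̿` its dual on `X**`),
then `X_π ∩ Ann(X*_π̄) = {0}`. -/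
theorem invariant_inter_ann_eq_zero_of_weakStarDense
    {G X : Type*} [Group G] [NormedAddCommGroup X] [NormedSpace ℝ X] [CompleteSpace X]
    (π : G →* (X ≃L[ℝ] X))
    (hdense : Dense {f : WeakDual ℝ X |
      ∃ f₁ f₂ : StrongDual ℝ X,
        (∀ (g : G) (x : X), f₁ (π g x) = f₁ x) ∧
        (∀ F : StrongDual ℝ (StrongDual ℝ X),
            (∀ (g : G) (h : StrongDual ℝ X),
              F (h.comp ((π g⁻¹ : X ≃L[ℝ] X) : X →L[ℝ] X)) = F h) → F f₂ = 0) ∧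
        StrongDual.toWeakDual (f₁ + f₂) = f}) :
    ∀ x : X, (∀ g : G, π g x = x) →
      (∀ f : StrongDual ℝ X, (∀ (g : G) (y : X), f (π g y) = f y) → f x = 0) →
      x = 0 := by
  intro x hx hf
  have key : ∀ f : WeakDual ℝ X, f x = 0 := by
    have hclosed : IsClosed {f : WeakDual ℝ X | f x = 0} :=
      isClosed_eq (WeakDual.eval_continuous x) continuous_const
    have hsub : {f : WeakDual ℝ X |
        ∃ f₁ f₂ : StrongDual ℝ X,
          (∀ (g : G) (x : X), f₁ (π g x) = f₁ x) ∧
          (∀ F : StrongDual ℝ (StrongDual ℝ X),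
              (∀ (g : G) (h : StrongDual ℝ X),
                F (h.comp ((π g⁻¹ : X ≃L[ℝ] X) : X →L[ℝ] X)) = F h) → F f₂ = 0) ∧
          StrongDual.toWeakDual (f₁ + f₂) = f} ⊆ {f : WeakDual ℝ X | f x = 0} := by
      rintro f ⟨f₁, f₂, h₁, h₂, rfl⟩
      have hF2 : f₂ x = 0 := by
        have := h₂ (NormedSpace.inclusionInDoubleDual ℝ X x) ?_
        · simpa using this
        · intro g h
          simp only [NormedSpace.dual_def, ContinuousLinearMap.comp_apply,
            ContinuousLinearEquiv.coe_coe]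
          rw [hx]
      have hF1 : f₁ x = 0 := hf f₁ h₁
      show (f₁ + f₂) x = 0
      simp [hF1, hF2]
    intro f
    have : f ∈ closure {f : WeakDual ℝ X | f x = 0} :=
      closure_mono hsub (hdense.closure_eq ▸ Set.mem_univ f : f ∈ closure _)
    rwa [hclosed.closure_eq] at this
  exact NormedSpace.eq_zero_of_forall_dual_eq_zero ℝ fun f =>
    key (StrongDual.toWeakDual f)
end

section
/- Let π be a representation of a group G on a Banach space X. Suppose that for every x ∈ X the closed convex hull of the orbit O(x) = {π(g)x : g ∈ G} contains a π-invariant vector. Then X = X_π + Ann(X*_π̄). -/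
/-- Let `π` be a representation of a group `G` on a Banach space `X`. If for every
`x ∈ X` the closed convex hull of the orbit `O(x) = {π g x : g ∈ G}` contains an
invariant vector, then `X = X_π + Ann(X*_π̄)`. -/
theorem decomposition_of_fixed_point_in_orbit_hull
    {G X : Type*} [Group G] [NormedAddCommGroup X] [NormedSpace ℝ X] [CompleteSpace X]
    (π : G →* (X ≃L[ℝ] X))
    (hfix : ∀ x : X, ∃ y ∈ closure (convexHull ℝ {z : X | ∃ g : G, z = π g x}),
        ∀ g : G, π g y = y) :
    ∀ x : X, ∃ y z : X, (∀ g : G, π g y = y) ∧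
      (∀ f : StrongDual ℝ X, (∀ (g : G) (w : X), f (π g w) = f w) → f z = 0) ∧
      x = y + z := by
  intro x
  obtain ⟨y, hy, hinv⟩ := hfix x
  refine ⟨y, x - y, hinv, ?_, by abel⟩
  intro f hf
  have hsub : closure (convexHull ℝ {z : X | ∃ g : G, z = π g x}) ⊆ f ⁻¹' {f x} := by
    apply closure_minimal
    · apply convexHull_min
      · rintro z ⟨g, rfl⟩
        simp [hf g x]
      · exact (convex_singleton (f x)).linear_preimage f.toLinearMap
    · exact IsClosed.preimage f.continuous isClosed_singleton
  have hfy : f y = f x := hsub hy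
  simp [map_sub, hfy]
end

section
/- Let π be a representation of a group G on a Banach space X. Suppose that for every f ∈ X* the weak-* closed convex hull of the orbit O(f) = {π̄(g)f : g ∈ G} contains a π̄-invariant functional. Then X* = X*_π̄ + Ann(X_π). -/
/-- Let `π` be a representation of a group `G` on a Banach space `X`. If for every
`f ∈ X*` the weak-* closed convex hull of the orbit `O(f) = {π̄ g f : g ∈ G}` (where
`π̄ g f = f ∘ π g⁻¹` is the dual representation) contains a `π̄`-invariant functional,
then `X* = X*_π̄ + Ann(X_π)`. -/
theorem dual_decomposition_of_fixed_point_in_weakStar_orbit_hull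
    {G X : Type*} [Group G] [NormedAddCommGroup X] [NormedSpace ℝ X] [CompleteSpace X]
    (π : G →* (X ≃L[ℝ] X))
    (hfix : ∀ f : StrongDual ℝ X,
      ∃ f₀ ∈ closure (convexHull ℝ {h : WeakDual ℝ X | ∃ g : G,
          h = StrongDual.toWeakDual (f.comp ((π g⁻¹ : X ≃L[ℝ] X) : X →L[ℝ] X))}),
        ∀ (g : G) (x : X), f₀ (π g x) = f₀ x) :
    ∀ f : StrongDual ℝ X, ∃ f₁ f₂ : StrongDual ℝ X,
      (∀ (g : G) (x : X), f₁ (π g x) = f₁ x) ∧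
      (∀ x : X, (∀ g : G, π g x = x) → f₂ x = 0) ∧
      f = f₁ + f₂ := by
  intro f
  obtain ⟨f₀, hmem, hinv⟩ := hfix f
  refine ⟨WeakDual.toStrongDual f₀, f - WeakDual.toStrongDual f₀, hinv, ?_, by abel⟩
  intro x hx
  suffices h : f₀ x = f x by
    simpa [sub_eq_zero] using h.symm
  -- the set of functionals agreeing with f at x
  have key : closure (convexHull ℝ {h : WeakDual ℝ X | ∃ g : G,
      h = StrongDual.toWeakDual (f.comp ((π g⁻¹ : X ≃L[ℝ] X) : X →L[ℝ] X))})
      ⊆ {h : WeakDual ℝ X | h x = f x} := by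
    apply closure_minimal
    · apply convexHull_min
      · rintro h ⟨g, rfl⟩
        show f ((π g⁻¹ : X ≃L[ℝ] X) x) = f x
        rw [hx g⁻¹]
      · intro h1 hm1 h2 hm2 a b _ _ hab
        simp only [Set.mem_setOf_eq] at hm1 hm2 ⊢
        show (a • h1 + b • h2) x = f x
        calc (a • h1 + b • h2) x = a * h1 x + b * h2 x := rfl
        _ = (a + b) * f x := by rw [hm1, hm2]; ring
        _ = f x := by rw [hab, one_mul]
    · exact isClosed_eq (WeakDual.eval_continuous x) continuous_const
  exact key hmem
end

section
/- Let G be a compact topological group and π a strongly continuous representation of G on a Banach space X (i.e., g ↦ π(g)x is continuous for each x ∈ X). Then X decomposes as the direct sum of closed subspaces X = X_π ⊕ Ann(X*_π̄). Moreover, if π is isometric, the corresponding projection of X onto X_π (with kernel Ann(X*_π̄)) has norm at most 1. -/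
open MeasureTheory

/-- Let `G` be a compact topological group and `π` a strongly continuous representation
of `G` on a Banach space `X`. Then `X = X_π ⊕ Ann(X*_π̄)`: there is a bounded linear
projection `P` of `X` onto the subspace of invariant vectors whose kernel is the
preannihilator of the invariant functionals. Moreover, if `π` is isometric then
`‖P‖ ≤ 1`. -/
theorem compactGroup_decomposition_invariant_vectors
    {G X : Type*} [Group G] [TopologicalSpace G] [IsTopologicalGroup G] [CompactSpace G]
    [NormedAddCommGroup X] [NormedSpace ℝ X] [CompleteSpace X]
    (π : G →* (X ≃L[ℝ] X))
    (hcont : ∀ x : X, Continuous fun g : G => π g x) :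
    ∃ P : X →L[ℝ] X,
      (∀ (x : X) (g : G), π g (P x) = P x) ∧
      (∀ x : X, (∀ g : G, π g x = x) → P x = x) ∧
      (∀ x : X, P x = 0 ↔
        ∀ f : StrongDual ℝ X, (∀ (g : G) (y : X), f (π g y) = f y) → f x = 0) ∧
      ((∀ (g : G) (x : X), ‖π g x‖ = ‖x‖) → ‖P‖ ≤ 1) := by
  classical
  borelize G
  haveI : Nonempty G := ⟨1⟩
  set K₀ : TopologicalSpace.PositiveCompacts G := ⊤ with hK₀
  set μ : Measure G := Measure.haarMeasure K₀ with hμ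
  haveI : IsProbabilityMeasure μ := by
    constructor
    have := Measure.haarMeasure_self (K₀ := K₀)
    have h2 : ((K₀ : Set G)) = Set.univ := by simp [hK₀]
    rw [← h2]
    exact this
  -- integrability of continuous functions on compact G
  have hint : ∀ F : G → X, Continuous F → Integrable F μ := fun F hF =>
    hF.integrable_of_hasCompactSupport (HasCompactSupport.of_compactSpace F)
  have hintR : ∀ F : G → ℝ, Continuous F → Integrable F μ := fun F hF =>
    hF.integrable_of_hasCompactSupport (HasCompactSupport.of_compactSpace F)
  -- uniform bound on the operators
  obtain ⟨C, hC⟩ : ∃ C, ∀ g : G, ‖((π g : X ≃L[ℝ] X) : X →L[ℝ] X)‖ ≤ C := by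
    apply banach_steinhaus
    intro x
    obtain ⟨C, hC⟩ := (isCompact_range (hcont x)).isBounded.exists_norm_le
    exact ⟨C, fun g => hC _ ⟨g, rfl⟩⟩
  -- the averaging linear map
  set Pl : X →ₗ[ℝ] X :=
    { toFun := fun x => ∫ g, π g x ∂μ
      map_add' := by
        intro x y
        simp only [map_add]
        exact integral_add (hint _ (hcont x)) (hint _ (hcont y))
      map_smul' := by
        intro c x
        simp only [_root_.map_smul, RingHom.id_apply]
        exact integral_smul c fun g => (π g) x } with hPl
  have hPlbound : ∀ x : X, ‖Pl x‖ ≤ max C 0 * ‖x‖ := by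
    intro x
    have : ‖∫ g, π g x ∂μ‖ ≤ max C 0 * ‖x‖ * (μ Set.univ).toReal := by
      apply norm_integral_le_of_norm_le_const
      filter_upwards with g
      calc ‖π g x‖ ≤ ‖((π g : X ≃L[ℝ] X) : X →L[ℝ] X)‖ * ‖x‖ :=
            (π g : X →L[ℝ] X).le_opNorm x
        _ ≤ max C 0 * ‖x‖ :=
            mul_le_mul_of_nonneg_right ((hC g).trans (le_max_left _ _)) (norm_nonneg x)
    show ‖∫ g, π g x ∂μ‖ ≤ max C 0 * ‖x‖
    simpa [measure_univ] using this
  set P : X →L[ℝ] X := Pl.mkContinuous (max C 0) hPlbound with hP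
  have hPapply : ∀ x : X, P x = ∫ g, π g x ∂μ := fun x => rfl
  -- (1) invariance of P x
  have hinv : ∀ (x : X) (g : G), π g (P x) = P x := by
    intro x h
    rw [hPapply]
    rw [← ContinuousLinearEquiv.integral_comp_comm (π h : X ≃L[ℝ] X)]
    have : ∀ g : G, π h (π g x) = π (h * g) x := by
      intro g; rw [map_mul]; rfl
    simp_rw [this]
    rw [integral_mul_left_eq_self (fun g => π g x) h]
  -- (2) fixed points
  have hfix : ∀ x : X, (∀ g : G, π g x = x) → P x = x := by
    intro x hx
    rw [hPapply]
    simp_rw [hx]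
    simp [measure_univ]
  -- functional through the integral
  have hfP : ∀ (f : StrongDual ℝ X) (x : X), f (P x) = ∫ g, f (π g x) ∂μ := by
    intro f x
    rw [hPapply, ContinuousLinearMap.integral_comp_comm f (hint _ (hcont x))]
  -- invariant functionals are preserved by P
  have hinvf : ∀ (f : StrongDual ℝ X), (∀ (g : G) (y : X), f (π g y) = f y) →
      ∀ x : X, f (P x) = f x := by
    intro f hf x
    rw [hfP]
    simp_rw [hf]
    simp [measure_univ]
  refine ⟨P, hinv, hfix, ?_, ?_⟩
  · intro x
    constructor
    · intro hPx f hf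
      have := hinvf f hf x
      rw [hPx, map_zero] at this
      exact this.symm
    · intro hx
      apply NormedSpace.eq_zero_of_forall_dual_eq_zero ℝ
      intro f
      -- average f over the group (using inverses, so that left invariance applies)
      have hcont' : ∀ y : X, Continuous fun g : G => f (π g⁻¹ y) := by
        intro y
        exact f.continuous.comp ((hcont y).comp continuous_inv)
      set fl : X →ₗ[ℝ] ℝ :=
        { toFun := fun y => ∫ g, f (π g⁻¹ y) ∂μ
          map_add' := by
            intro y z
            simp only [map_add]
            exact integral_add (hintR _ (hcont' y)) (hintR _ (hcont' z))
          map_smul' := by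
            intro c y
            simp only [_root_.map_smul, RingHom.id_apply, smul_eq_mul]
            exact integral_smul c fun g => f ((π g⁻¹) y) } with hfl
      have hflbound : ∀ y : X, ‖fl y‖ ≤ ‖f‖ * max C 0 * ‖y‖ := by
        intro y
        have : ‖∫ g, f (π g⁻¹ y) ∂μ‖ ≤ ‖f‖ * max C 0 * ‖y‖ * (μ Set.univ).toReal := by
          apply norm_integral_le_of_norm_le_const
          filter_upwards with g
          calc ‖f (π g⁻¹ y)‖ ≤ ‖f‖ * ‖π g⁻¹ y‖ := f.le_opNorm _
            _ ≤ ‖f‖ * (max C 0 * ‖y‖) := by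
                apply mul_le_mul_of_nonneg_left _ (norm_nonneg f)
                calc ‖π g⁻¹ y‖ ≤ ‖((π g⁻¹ : X ≃L[ℝ] X) : X →L[ℝ] X)‖ * ‖y‖ :=
                      (π g⁻¹ : X →L[ℝ] X).le_opNorm y
                  _ ≤ max C 0 * ‖y‖ := mul_le_mul_of_nonneg_right
                      ((hC g⁻¹).trans (le_max_left _ _)) (norm_nonneg y)
            _ = ‖f‖ * max C 0 * ‖y‖ := (mul_assoc _ _ _).symm
        show ‖∫ g, f (π g⁻¹ y) ∂μ‖ ≤ ‖f‖ * max C 0 * ‖y‖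
        simpa [measure_univ] using this
      set ftilde : StrongDual ℝ X := fl.mkContinuous (‖f‖ * max C 0) hflbound
        with hftilde
      have hftapply : ∀ y : X, ftilde y = ∫ g, f (π g⁻¹ y) ∂μ := fun y => rfl
      have hftinv : ∀ (g : G) (y : X), ftilde (π g y) = ftilde y := by
        intro h y
        rw [hftapply, hftapply]
        have h1 : ∀ g : G, f (π g⁻¹ (π h y)) = f (π (g⁻¹ * h) y) := by
          intro g; rw [map_mul]; rfl
        simp_rw [h1]
        have h2 := integral_mul_left_eq_self (μ := μ) (fun g => f (π (g⁻¹ * h) y)) h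
        rw [← h2]
        congr 1
        funext g
        simp [mul_inv_rev, mul_assoc]
      have h0 : ftilde x = 0 := hx ftilde hftinv
      have h1 : ftilde (P x) = f (P x) := by
        rw [hftapply]
        have : ∀ g : G, f (π g⁻¹ (P x)) = f (P x) := fun g => by rw [hinv x g⁻¹]
        simp_rw [this]
        simp [measure_univ]
      have h2 : ftilde (P x) = ftilde x := hinvf ftilde hftinv x
      rw [← h1, h2, h0]
  · intro hiso
    apply ContinuousLinearMap.opNorm_le_bound _ zero_le_one
    intro x
    rw [hPapply]
    have : ‖∫ g, π g x ∂μ‖ ≤ ‖x‖ * (μ Set.univ).toReal := by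
      apply norm_integral_le_of_norm_le_const
      filter_upwards with g
      exact le_of_eq (hiso g x)
    simpa [measure_univ] using this
end

section
/- Let π be a uniformly bounded representation of an amenable discrete group G on a Banach space X. Then (i) X* = X*_π̄ + Ann(X_π), and (ii) X_π ∩ Ann(X*_π̄) = {0}. -/
/-- A discrete group `G` is amenable if there is a left-invariant mean on `ℓ∞(G)`,
i.e. a positive linear functional `m` on the bounded (continuous, w.r.t. the discrete
topology) real functions on `G` with `m 1 = 1` and `m (g · f) = m f` for all `g`,
where `(g · f)(h) = f (g⁻¹ h)`. -/
def IsAmenable (G : Type*) [Group G] : Prop :=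
  letI : TopologicalSpace G := ⊥
  ∃ m : BoundedContinuousFunction G ℝ →ₗ[ℝ] ℝ,
    (∀ f : BoundedContinuousFunction G ℝ, (∀ x, 0 ≤ f x) → 0 ≤ m f) ∧
    m 1 = 1 ∧
    ∀ (g : G) (f : BoundedContinuousFunction G ℝ),
      m (f.compContinuous ⟨fun h => g⁻¹ * h, by
        letI : DiscreteTopology G := ⟨rfl⟩
        exact continuous_of_discreteTopology⟩) = m f

/-- Let `π` be a uniformly bounded representation of an amenable discrete group `G` on
a Banach space `X`. Then (i) `X* = X*_π̄ + Ann(X_π)` and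
(ii) `X_π ∩ Ann(X*_π̄) = {0}`. -/
theorem amenable_dual_decomposition_and_trivial_intersection
    {G X : Type*} [Group G] [NormedAddCommGroup X] [NormedSpace ℝ X] [CompleteSpace X]
    (hG : IsAmenable G) (π : G →* (X ≃L[ℝ] X))
    (hub : ∃ C : ℝ, ∀ g : G, ‖((π g : X ≃L[ℝ] X) : X →L[ℝ] X)‖ ≤ C) :
    (∀ f : StrongDual ℝ X, ∃ f₁ f₂ : StrongDual ℝ X,
      (∀ (g : G) (x : X), f₁ (π g x) = f₁ x) ∧
      (∀ x : X, (∀ g : G, π g x = x) → f₂ x = 0) ∧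
      f = f₁ + f₂) ∧
    (∀ x : X, (∀ g : G, π g x = x) →
      (∀ f : StrongDual ℝ X, (∀ (g : G) (y : X), f (π g y) = f y) → f x = 0) →
      x = 0) := by
  classical
  letI : TopologicalSpace G := ⊥
  haveI : DiscreteTopology G := ⟨rfl⟩
  obtain ⟨m, hpos, hone, hinv⟩ := hG
  obtain ⟨C, hC⟩ := hub
  have hC0 : 0 ≤ C := le_trans (norm_nonneg _) (hC 1)
  -- the mean is bounded with norm ≤ 1
  have hm_bound : ∀ u : BoundedContinuousFunction G ℝ, |m u| ≤ ‖u‖ := by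
    intro u
    have hb : ∀ g : G, |u g| ≤ ‖u‖ := fun g => u.norm_coe_le_norm g
    have h1 : 0 ≤ m (‖u‖ • 1 - u) := by
      refine hpos _ fun g => ?_
      have := (abs_le.mp (hb g)).2
      simp only [BoundedContinuousFunction.coe_sub, BoundedContinuousFunction.coe_smul,
        BoundedContinuousFunction.coe_one, Pi.sub_apply, Pi.smul_apply, Pi.one_apply,
        smul_eq_mul, mul_one, sub_nonneg]
      exact this
    have h2 : 0 ≤ m (‖u‖ • 1 + u) := by
      refine hpos _ fun g => ?_
      have := (abs_le.mp (hb g)).1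
      simp only [BoundedContinuousFunction.coe_add, BoundedContinuousFunction.coe_smul,
        BoundedContinuousFunction.coe_one, Pi.add_apply, Pi.smul_apply, Pi.one_apply,
        smul_eq_mul, mul_one]
      linarith
    rw [map_sub, map_smul, hone, smul_eq_mul, mul_one, sub_nonneg] at h1
    rw [map_add, map_smul, hone, smul_eq_mul, mul_one] at h2
    exact abs_le.mpr ⟨by linarith, h1⟩
  -- the key averaging construction
  have key : ∀ f : StrongDual ℝ X, ∃ f₁ : StrongDual ℝ X,
      (∀ (g : G) (x : X), f₁ (π g x) = f₁ x) ∧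
      (∀ x : X, (∀ g : G, π g x = x) → f₁ x = f x) := by
    intro f
    have hbnd : ∀ (x : X) (g : G), ‖f (π g⁻¹ x)‖ ≤ ‖f‖ * (C * ‖x‖) := by
      intro x g
      calc ‖f (π g⁻¹ x)‖ ≤ ‖f‖ * ‖π g⁻¹ x‖ := f.le_opNorm _
        _ ≤ ‖f‖ * (C * ‖x‖) := by
          gcongr
          calc ‖π g⁻¹ x‖ ≤ ‖((π g⁻¹ : X ≃L[ℝ] X) : X →L[ℝ] X)‖ * ‖x‖ :=
                ((π g⁻¹ : X ≃L[ℝ] X) : X →L[ℝ] X).le_opNorm x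
            _ ≤ C * ‖x‖ := by gcongr; exact hC g⁻¹
    set F : X → BoundedContinuousFunction G ℝ := fun x =>
      BoundedContinuousFunction.ofNormedAddCommGroup (fun g => f (π g⁻¹ x))
        continuous_of_discreteTopology (‖f‖ * (C * ‖x‖)) (hbnd x) with hF
    have hFapp : ∀ (x : X) (g : G), F x g = f (π g⁻¹ x) := fun _ _ => rfl
    have hFnorm : ∀ x : X, ‖F x‖ ≤ ‖f‖ * C * ‖x‖ := by
      intro x
      rw [mul_assoc]
      exact BoundedContinuousFunction.norm_ofNormedAddCommGroup_le _
        (by positivity) (hbnd x)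
    set lin : X →ₗ[ℝ] ℝ :=
      { toFun := fun x => m (F x)
        map_add' := by
          intro x y
          have h : F (x + y) = F x + F y := by
            ext g; simp [hFapp]
          show m (F (x + y)) = m (F x) + m (F y)
          rw [h, map_add]
        map_smul' := by
          intro c x
          have h : F (c • x) = c • F x := by
            ext g; simp [hFapp]
          show m (F (c • x)) = (RingHom.id ℝ) c • m (F x)
          rw [h, map_smul]; rfl } with hlin
    have hlinapp : ∀ x : X, lin x = m (F x) := fun _ => rfl
    refine ⟨LinearMap.mkContinuous lin (‖f‖ * C) (fun x => ?_), ?_, ?_⟩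
    · calc ‖lin x‖ = |m (F x)| := rfl
        _ ≤ ‖F x‖ := hm_bound _
        _ ≤ ‖f‖ * C * ‖x‖ := hFnorm x
    · intro h x
      show m (F (π h x)) = m (F x)
      have : F (π h x) = (F x).compContinuous ⟨fun g => h⁻¹ * g,
          continuous_of_discreteTopology⟩ := by
        ext g
        simp only [hFapp, BoundedContinuousFunction.compContinuous_apply,
          ContinuousMap.coe_mk]
        have h2 : π (h⁻¹ * g)⁻¹ x = π g⁻¹ (π h x) := by
          rw [mul_inv_rev, inv_inv, map_mul]
          rfl
        rw [h2]
      rw [this, hinv h (F x)]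
    · intro x hx
      show m (F x) = f x
      have : F x = (f x) • 1 := by
        ext g; rw [hFapp, hx g⁻¹]; simp
      rw [this, map_smul, hone, smul_eq_mul, mul_one]
  constructor
  · intro f
    obtain ⟨f₁, hinv₁, hfix⟩ := key f
    refine ⟨f₁, f - f₁, hinv₁, ?_, by abel⟩
    intro x hx
    simp [hfix x hx]
  · intro x hx H
    by_contra hx0
    obtain ⟨f, _, hfx⟩ := exists_dual_vector ℝ x (norm_ne_zero_iff.mpr hx0)
    obtain ⟨f₁, hinv₁, hfix⟩ := key f
    have := H f₁ hinv₁
    rw [hfix x hx, hfx] at this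
    exact hx0 (norm_eq_zero.mp (by exact_mod_cast this))
end

section
/- Let π be a representation of a group G on a Banach space X, and suppose Y is a closed subspace of X with X = X_π ⊕ Y (direct sum) such that Y is π(G)-invariant (π(g)Y ⊆ Y for all g ∈ G). Then Y ⊇ Ann(X*_π̄). -/
/-- The subspace `X_π` of vectors invariant under a representation `π`. -/
def invariantVectors {G X : Type*} [Group G] [NormedAddCommGroup X] [NormedSpace ℝ X]
    (π : G →* (X ≃L[ℝ] X)) : Submodule ℝ X where
  carrier := {x : X | ∀ g : G, π g x = x}
  add_mem' := by
    intro a b ha hb g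
    rw [map_add, ha g, hb g]
  zero_mem' := by
    intro g
    rw [map_zero]
  smul_mem' := by
    intro c x hx g
    rw [map_smul, hx g]

/-- Let `π` be a representation of a group `G` on a Banach space `X`, and suppose `Y`
is a closed `π(G)`-invariant subspace of `X` with `X = X_π ⊕ Y`. Then
`Y ⊇ Ann(X*_π̄)`. -/
theorem invariant_complement_contains_preannihilator
    {G X : Type*} [Group G] [NormedAddCommGroup X] [NormedSpace ℝ X] [CompleteSpace X]
    (π : G →* (X ≃L[ℝ] X)) (Y : Submodule ℝ X) (hclosed : IsClosed (Y : Set X))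
    (hinv : ∀ (g : G), ∀ y ∈ Y, π g y ∈ Y)
    (hcompl : IsCompl (invariantVectors π) Y) :
    ∀ x : X,
      (∀ f : StrongDual ℝ X, (∀ (g : G) (y : X), f (π g y) = f y) → f x = 0) →
      x ∈ Y := by
  -- `invariantVectors π` is closed
  have hXcl : IsClosed ((invariantVectors π : Set X)) := by
    have : (invariantVectors π : Set X) = ⋂ g : G, {x : X | π g x = x} := by
      ext x; simp [invariantVectors, Set.mem_iInter]
    rw [this]
    exact isClosed_iInter fun g => isClosed_eq (π g).continuous continuous_id
  set P : X →L[ℝ] invariantVectors π :=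
    (invariantVectors π).linearProjOfClosedCompl Y hcompl hXcl hclosed with hP
  -- the projection is invariant under the representation
  have hPinv : ∀ (g : G) (z : X), P (π g z) = P z := by
    intro g z
    obtain ⟨a, y, ha, hy, rfl⟩ :=
      Submodule.codisjoint_iff_exists_add_eq.mp hcompl.codisjoint z
    have h1 : (π g) (a + y) = a + (π g) y := by rw [map_add, ha g]
    rw [h1]
    have hPa : ∀ y' ∈ Y, P (a + y') = ⟨a, ha⟩ := by
      intro y' hy'
      have := Submodule.projectionOnto_apply_left hcompl ⟨a, ha⟩
      calc P (a + y') = Submodule.projectionOnto _ _ hcompl (a + y') := by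
            rw [hP]; simp [Submodule.coe_continuous_linearProjOfClosedCompl']
        _ = ⟨a, ha⟩ := by
            rw [map_add, Submodule.projectionOnto_apply_left hcompl ⟨a, ha⟩,
              Submodule.projectionOnto_apply_right hcompl ⟨y', hy'⟩, add_zero]
    rw [hPa _ (hinv g y hy), hPa y hy]
  intro x hx
  obtain ⟨a, y, ha, hy, rfl⟩ :=
    Submodule.codisjoint_iff_exists_add_eq.mp hcompl.codisjoint x
  have hPx : ((invariantVectors π).subtypeL (P (a + y)) : X) = a := by
    have : P (a + y) = ⟨a, ha⟩ := by
      rw [hP]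
      show Submodule.projectionOnto _ _ hcompl (a + y) = ⟨a, ha⟩
      rw [map_add, Submodule.projectionOnto_apply_left hcompl ⟨a, ha⟩,
        Submodule.projectionOnto_apply_right hcompl ⟨y, hy⟩, add_zero]
    rw [this]; rfl
  have ha0 : a = 0 := by
    apply NormedSpace.eq_zero_of_forall_dual_eq_zero ℝ
    intro φ
    have := hx (φ.comp ((invariantVectors π).subtypeL.comp P)) ?_
    · simpa only [ContinuousLinearMap.comp_apply, hPx] using this
    · intro g z
      simp [hPinv g z]
  have : a + y = y := by rw [ha0, zero_add]
  rw [this]; exact hy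
end

section
/- Let a group G act on a compact metric space K by homeomorphisms, and suppose the action is Lyapunov stable. Let π be the induced representation of G on C(K) given by (π(g)φ)(x) = φ(g⁻¹x). Then for every φ ∈ C(K), the orbit O(φ) = {π(g)φ : g ∈ G} is precompact (totally bounded) in the sup norm of C(K). -/
open BoundedContinuousFunction Metric

/-- Let a group `G` act by homeomorphisms on a compact metric space `K`, with the
action Lyapunov stable. Let `π` be the induced representation on `C(K)`, given by
`(π g φ) x = φ (g⁻¹ • x)`. Then for every `φ ∈ C(K)` the orbit
`O(φ) = {π g φ : g ∈ G}` is totally bounded in the sup norm of `C(K)`. -/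
theorem lyapunov_stable_orbit_totallyBounded
    {G K : Type*} [Group G] [MetricSpace K] [CompactSpace K] [MulAction G K]
    [ContinuousConstSMul G K]
    (hLS : ∀ ε > (0 : ℝ), ∃ δ > (0 : ℝ),
      ∀ (g : G) (x y : K), dist x y < δ → dist (g • x) (g • y) < ε)
    (φ : C(K, ℝ)) :
    TotallyBounded
      {ψ : C(K, ℝ) | ∃ g : G,
        ψ = φ.comp ⟨fun x : K => g⁻¹ • x, continuous_const_smul _⟩} := by
  set S : Set C(K, ℝ) := {ψ : C(K, ℝ) | ∃ g : G,
        ψ = φ.comp ⟨fun x : K => g⁻¹ • x, continuous_const_smul _⟩}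
  -- transport through the isometry with bounded continuous functions
  let e := ContinuousMap.isometryEquivBoundedOfCompact K ℝ
  let A : Set (K →ᵇ ℝ) := e '' S
  -- uniform continuity of φ
  have hφuc : UniformContinuous (φ : K → ℝ) :=
    CompactSpace.uniformContinuous_of_continuous φ.continuous
  -- equicontinuity of the orbit family
  have hequi : Equicontinuous ((↑) : A → K → ℝ) := by
    intro x
    rw [Metric.equicontinuousAt_iff]
    intro ε hε
    obtain ⟨η, hη, hηφ⟩ := Metric.uniformContinuous_iff.1 hφuc ε hε
    obtain ⟨δ, hδ, hδη⟩ := hLS η hη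
    refine ⟨δ, hδ, fun y hy i => ?_⟩
    obtain ⟨ψ, ⟨g, hg⟩, hψ⟩ := i.2
    have : (i : K →ᵇ ℝ) = e ψ := hψ.symm
    rw [this, hg]
    exact hηφ (hδη g⁻¹ x y (dist_comm x y ▸ hy))
  -- pointwise range in a fixed compact set
  have hin : ∀ (f : K →ᵇ ℝ) (x : K), f ∈ A → f x ∈ Metric.closedBall (0 : ℝ) ‖φ‖ := by
    rintro f x ⟨ψ, ⟨g, hg⟩, rfl⟩
    simp only [Metric.mem_closedBall, dist_zero_right]
    subst hg
    exact φ.norm_coe_le_norm (g⁻¹ • x)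
  have hcpt : IsCompact (closure A) :=
    BoundedContinuousFunction.arzela_ascoli (Metric.closedBall (0 : ℝ) ‖φ‖)
      (isCompact_closedBall _ _) A hin hequi
  have hA : TotallyBounded A := (hcpt.totallyBounded).subset subset_closure
  have : S = e.symm '' A := by
    simp [A, Set.image_image]
  rw [this]
  exact hA.image e.symm.isometry.uniformContinuous
end

section
/- Let a group G act on a compact metric space K by homeomorphisms, and suppose the action is Lyapunov stable. Let π be the induced representation of G on C(K). Then C(K) = C(K)_π + Ann(C(K)*_π̄). -/
open Set

section kakutani

variable {E : Type*} [NormedAddCommGroup E] [NormedSpace ℝ E]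

lemma minimal_invariant_subsingleton {ι : Type*} (T : ι → E →ₗ[ℝ] E)
    (hiso : ∀ i (a b : E), ‖T i a - T i b‖ = ‖a - b‖)
    {M : Set E} (hne : M.Nonempty) (hMc : IsCompact M) (hMconv : Convex ℝ M)
    (hinv : ∀ i, T i '' M = M)
    (hmin : ∀ A ⊆ M, A.Nonempty → IsCompact A → Convex ℝ A → (∀ i, T i '' A ⊆ A) → A = M) :
    M.Subsingleton := by
  by_contra hsub
  rw [Set.not_subsingleton_iff] at hsub
  obtain ⟨u, hu, v, hv, huv⟩ := hsub
  set D := Metric.diam M with hDdef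
  have hDpos : 0 < D := lt_of_lt_of_le (dist_pos.2 huv)
    (Metric.dist_le_diam_of_mem hMc.isBounded hu hv)
  -- finite (D/2)-net with centers in M
  have hd : {p : E × E | dist p.1 p.2 < D / 2} ∈ uniformity E :=
    Metric.dist_mem_uniformity (by linarith)
  obtain ⟨t, hts, htfin, hcover⟩ := totallyBounded_iff_subset.1 hMc.totallyBounded _ hd
  classical
  set F : Finset E := htfin.toFinset with hFdef
  have hFsub : ∀ x ∈ F, x ∈ M := fun x hx => hts (htfin.mem_toFinset.1 hx)
  have hFne : F.Nonempty := by
    obtain ⟨y, hy⟩ := hne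
    have := hcover hy
    simp only [Set.mem_iUnion] at this
    obtain ⟨i, hi, _⟩ := this
    exact ⟨i, htfin.mem_toFinset.2 hi⟩
  set n : ℕ := F.card with hndef
  have hnpos : 0 < n := Finset.card_pos.2 hFne
  have hnR : (0 : ℝ) < n := by exact_mod_cast hnpos
  set w : E → ℝ := fun _ => (n : ℝ)⁻¹ with hwdef
  have hwsum : ∑ x ∈ F, w x = 1 := by
    simp [hwdef, Finset.sum_const, hndef]
    field_simp
  set z : E := ∑ x ∈ F, w x • x with hzdef
  have hzM : z ∈ M := by
    have := hMconv.centerMass_mem (t := F) (w := w) (z := id)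
      (fun i _ => by positivity) (by rw [hwsum]; norm_num) (fun i hi => hFsub i hi)
    rwa [Finset.centerMass_eq_of_sum_1 _ _ hwsum] at this
  set r : ℝ := (n : ℝ)⁻¹ * (((n : ℝ) - 1) * D + D / 2) with hrdef
  have hrD : r < D := by
    rw [hrdef, inv_mul_lt_iff₀ hnR]
    nlinarith
  have hzr : ∀ y ∈ M, dist z y ≤ r := by
    intro y hy
    have := hcover hy
    simp only [Set.mem_iUnion] at this
    obtain ⟨i₀, hi₀t, hi₀⟩ := this
    have hi₀F : i₀ ∈ F := htfin.mem_toFinset.2 hi₀t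
    have hyz : z - y = ∑ x ∈ F, w x • (x - y) := by
      have hy' : y = ∑ x ∈ F, w x • y := by
        rw [← Finset.sum_smul, hwsum, one_smul]
      calc z - y = ∑ x ∈ F, w x • x - ∑ x ∈ F, w x • y := by rw [hzdef, ← hy']
        _ = ∑ x ∈ F, (w x • x - w x • y) := by rw [Finset.sum_sub_distrib]
        _ = ∑ x ∈ F, w x • (x - y) := by simp [smul_sub]
    have hsum_bound : ∑ x ∈ F, ‖x - y‖ ≤ ((n : ℝ) - 1) * D + D / 2 := by
      have hxD : ∀ x ∈ F.erase i₀, ‖x - y‖ ≤ D := fun x hx => by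
        rw [← dist_eq_norm]
        exact Metric.dist_le_diam_of_mem hMc.isBounded (hFsub x (Finset.erase_subset _ _ hx)) hy
      have h1 : ∑ x ∈ F.erase i₀, ‖x - y‖ ≤ ((n : ℝ) - 1) * D := by
        calc ∑ x ∈ F.erase i₀, ‖x - y‖ ≤ (F.erase i₀).card • D := Finset.sum_le_card_nsmul _ _ _ hxD
          _ = ((F.erase i₀).card : ℝ) * D := by rw [nsmul_eq_mul]
          _ = ((n : ℝ) - 1) * D := by
              rw [Finset.card_erase_of_mem hi₀F]
              congr 1
              rw [Nat.cast_sub hnpos]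
              simp [hndef]
      have h2 : ‖i₀ - y‖ ≤ D / 2 := by
        rw [← dist_eq_norm, dist_comm]
        exact le_of_lt hi₀
      calc ∑ x ∈ F, ‖x - y‖ = ‖i₀ - y‖ + ∑ x ∈ F.erase i₀, ‖x - y‖ :=
            (Finset.add_sum_erase _ _ hi₀F).symm
        _ ≤ D / 2 + ((n : ℝ) - 1) * D := add_le_add h2 h1
        _ = ((n : ℝ) - 1) * D + D / 2 := by ring
    rw [dist_eq_norm, hyz]
    calc ‖∑ x ∈ F, w x • (x - y)‖ ≤ ∑ x ∈ F, ‖w x • (x - y)‖ := norm_sum_le _ _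
      _ = ∑ x ∈ F, (n : ℝ)⁻¹ * ‖x - y‖ := by
          refine Finset.sum_congr rfl fun x _ => ?_
          rw [norm_smul, hwdef]
          simp [abs_of_pos (inv_pos.2 hnR)]
      _ = (n : ℝ)⁻¹ * ∑ x ∈ F, ‖x - y‖ := by rw [Finset.mul_sum]
      _ ≤ r := by
          rw [hrdef]
          exact mul_le_mul_of_nonneg_left hsum_bound (by positivity)
  -- the set of "centers"
  have hr0 : 0 ≤ r := le_trans dist_nonneg (hzr z hzM)
  set M' : Set E := M ∩ ⋂ y ∈ M, Metric.closedBall y r with hM'def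
  have hM'sub : M' ⊆ M := Set.inter_subset_left
  have hzM' : z ∈ M' := by
    refine ⟨hzM, ?_⟩
    simp only [Set.mem_iInter, Metric.mem_closedBall]
    intro y hy
    exact hzr y hy
  have hM'closed : IsClosed M' :=
    hMc.isClosed.inter (isClosed_biInter fun y _ => Metric.isClosed_closedBall)
  have hM'compact : IsCompact M' := hMc.of_isClosed_subset hM'closed hM'sub
  have hM'conv : Convex ℝ M' :=
    hMconv.inter (convex_iInter₂ fun y _ => convex_closedBall y r)
  have hM'inv : ∀ i, T i '' M' ⊆ M' := by
    rintro i p ⟨q, ⟨hqM, hq2⟩, rfl⟩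
    simp only [Set.mem_iInter, Metric.mem_closedBall] at hq2
    refine ⟨(hinv i) ▸ Set.mem_image_of_mem _ hqM, ?_⟩
    simp only [Set.mem_iInter, Metric.mem_closedBall]
    intro y hy
    have : y ∈ T i '' M := (hinv i).symm ▸ hy
    obtain ⟨q', hq'M, rfl⟩ := this
    rw [dist_eq_norm, hiso i, ← dist_eq_norm]
    exact hq2 q' hq'M
  have hM'M : M' = M := hmin M' hM'sub ⟨z, hzM'⟩ hM'compact hM'conv hM'inv
  -- contradiction : diam M > r
  have : ∃ p ∈ M, ∃ q ∈ M, r < dist p q := by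
    by_contra h
    push_neg at h
    exact absurd (Metric.diam_le_of_forall_dist_le hr0 h) (not_le.2 hrD)
  obtain ⟨p, hp, q, hq, hpq⟩ := this
  have hp' : p ∈ M' := hM'M ▸ hp
  have := hp'.2
  simp only [Set.mem_iInter, Metric.mem_closedBall] at this
  exact absurd (this q hq) (not_le.2 hpq)

end kakutani

section lyap

variable {G K : Type*} [Group G] [MetricSpace K] [CompactSpace K] [MulAction G K]
  [ContinuousConstSMul G K]

noncomputable def lyapT (g : G) : C(K, ℝ) →ₗ[ℝ] C(K, ℝ) where
  toFun ψ := ψ.comp ⟨fun x : K => g⁻¹ • x, continuous_const_smul _⟩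
  map_add' := by intros; rfl
  map_smul' := by intros; rfl

lemma lyapT_apply (g : G) (ψ : C(K, ℝ)) (x : K) : lyapT g ψ x = ψ (g⁻¹ • x) := rfl

lemma lyapT_mul (g h : G) (ψ : C(K, ℝ)) : lyapT g (lyapT h ψ) = lyapT (g * h) ψ := by
  ext x
  simp [lyapT_apply, mul_inv_rev, mul_smul]

lemma lyapT_one (ψ : C(K, ℝ)) : lyapT (1 : G) ψ = ψ := by
  ext x; simp [lyapT_apply]

lemma lyapT_inv_lyapT (g : G) (ψ : C(K, ℝ)) : lyapT g⁻¹ (lyapT g ψ) = ψ := by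
  rw [lyapT_mul]; ext x; simp [lyapT_apply]

lemma lyapT_norm (g : G) (ψ : C(K, ℝ)) : ‖lyapT g ψ‖ = ‖ψ‖ := by
  have key : ∀ (h : G) (χ : C(K, ℝ)), ‖lyapT h χ‖ ≤ ‖χ‖ := by
    intro h χ
    rw [ContinuousMap.norm_le _ (norm_nonneg _)]
    exact fun x => χ.norm_coe_le_norm _
  refine le_antisymm (key g ψ) ?_
  conv_lhs => rw [← lyapT_inv_lyapT g ψ]
  exact key g⁻¹ _

lemma lyapT_dist (g : G) (a b : C(K, ℝ)) : ‖lyapT g a - lyapT g b‖ = ‖a - b‖ := by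
  rw [← map_sub, lyapT_norm]

lemma lyapT_isometry (g : G) : Isometry (lyapT g (K := K)) :=
  AddMonoidHomClass.isometry_of_norm _ (lyapT_norm g)

end lyap

set_option maxHeartbeats 1000000 in
/-- Let a group `G` act by homeomorphisms on a compact metric space `K`, with the
action Lyapunov stable, and let `π` be the induced representation on `C(K)`. Then
`C(K) = C(K)_π + Ann(C(K)*_π̄)`: every `φ ∈ C(K)` is a sum of an invariant function
and a function annihilated by every `π̄`-invariant functional. -/
theorem lyapunov_stable_sum_decomposition
    {G K : Type*} [Group G] [MetricSpace K] [CompactSpace K] [MulAction G K]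
    [ContinuousConstSMul G K]
    (hLS : ∀ ε > (0 : ℝ), ∃ δ > (0 : ℝ),
      ∀ (g : G) (x y : K), dist x y < δ → dist (g • x) (g • y) < ε) :
    ∀ φ : C(K, ℝ), ∃ φ₁ φ₂ : C(K, ℝ),
      (∀ (g : G) (x : K), φ₁ (g • x) = φ₁ x) ∧
      (∀ f : StrongDual ℝ C(K, ℝ),
        (∀ (g : G) (ψ : C(K, ℝ)),
          f (ψ.comp ⟨fun x : K => g⁻¹ • x, continuous_const_smul _⟩) = f ψ) →
        f φ₂ = 0) ∧
      φ = φ₁ + φ₂ := by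
  intro φ
  classical
  -- the orbit of φ
  set S : Set C(K, ℝ) := Set.range (fun g : G => lyapT g φ) with hSdef
  -- the orbit, as a set of bare functions
  set A : Set (K → ℝ) := (fun f : C(K, ℝ) => ⇑f) '' S with hAdef
  -- equicontinuity of the orbit
  have hAeq : A.Equicontinuous := by
    intro x₀
    rw [Metric.equicontinuousAt_iff]
    intro ε hε
    obtain ⟨δ₁, hδ₁, hφ⟩ := Metric.uniformContinuous_iff.1
      (CompactSpace.uniformContinuous_of_continuous φ.continuous) ε hε
    obtain ⟨δ, hδ, hLSδ⟩ := hLS δ₁ hδ₁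
    refine ⟨δ, hδ, fun x hx i => ?_⟩
    obtain ⟨f, hfS, hf⟩ := i.2
    obtain ⟨g, rfl⟩ := hfS
    have h1 : dist (g⁻¹ • x) (g⁻¹ • x₀) < δ₁ := hLSδ g⁻¹ x x₀ hx
    have := hφ h1
    have e1 : (i : K → ℝ) x₀ = φ (g⁻¹ • x₀) := by rw [← hf]; rfl
    have e2 : (i : K → ℝ) x = φ (g⁻¹ • x) := by rw [← hf]; rfl
    rw [e1, e2, dist_comm]
    exact this
  -- pointwise closure of the orbit is compact and equicontinuous
  set Abar : Set (K → ℝ) := closure A with hAbardef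
  have hAbareq : Abar.Equicontinuous := hAeq.closure
  have hQc : IsCompact (Set.pi Set.univ fun _ : K => Set.Icc (-‖φ‖) ‖φ‖) :=
    isCompact_univ_pi fun _ => isCompact_Icc
  have hAQ : A ⊆ Set.pi Set.univ fun _ : K => Set.Icc (-‖φ‖) ‖φ‖ := by
    rintro a ⟨f, ⟨g, rfl⟩, rfl⟩ x _
    have h1 : ‖(lyapT g φ) x‖ ≤ ‖lyapT g φ‖ := (lyapT g φ).norm_coe_le_norm x
    rw [lyapT_norm] at h1
    rw [Real.norm_eq_abs, abs_le] at h1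
    exact Set.mem_Icc.2 h1
  have hAbarc : IsCompact Abar :=
    hQc.of_isClosed_subset isClosed_closure
      (closure_minimal hAQ (isClosed_set_pi fun _ _ => isClosed_Icc))
  -- all members of Abar are continuous
  have hAbarcont : ∀ a ∈ Abar, Continuous a := fun a ha => hAbareq.continuous_of_mem ha
  -- S is contained in a compact subset of C(K, ℝ), by Arzelà–Ascoli
  set S' : Set C(K, ℝ) := {f : C(K, ℝ) | ⇑f ∈ Abar} with hS'def
  have himg : ContinuousMap.toFun '' S' = Abar := by
    ext a
    constructor
    · rintro ⟨f, hf, rfl⟩; exact hf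
    · intro ha; exact ⟨⟨a, hAbarcont a ha⟩, ha, rfl⟩
  have hS'eq : Equicontinuous fun f : S' => ⇑(f : C(K, ℝ)) := by
    intro x₀
    intro U hU
    filter_upwards [hAbareq x₀ U hU] with x hx i
    exact hx ⟨⇑(i : C(K, ℝ)), i.2⟩
  have hS'c : IsCompact S' :=
    ArzelaAscoli.isCompact_of_equicontinuous S' (himg ▸ hAbarc) hS'eq
  have hSS' : S ⊆ S' := by
    rintro f ⟨g, rfl⟩
    exact subset_closure ⟨lyapT g φ, ⟨g, rfl⟩, rfl⟩
  have htbS : TotallyBounded S := hS'c.totallyBounded.subset hSS'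
  -- the closed convex hull of the orbit
  set C : Set C(K, ℝ) := closure (convexHull ℝ S) with hCdef
  have hCc : IsCompact C :=
    TotallyBounded.isCompact_of_isClosed (totallyBounded_convexHull.2 htbS).closure
      isClosed_closure
  have hCconv : Convex ℝ C := (convex_convexHull ℝ S).closure
  have hφC : φ ∈ C := by
    refine subset_closure (subset_convexHull ℝ S ?_)
    exact ⟨1, by ext x; simp [lyapT_apply]⟩
  have hCne : C.Nonempty := ⟨φ, hφC⟩
  -- invariance of S, the hull, and C
  have hSinv : ∀ g : G, lyapT g '' S ⊆ S := by
    rintro g _ ⟨_, ⟨h, rfl⟩, rfl⟩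
    exact ⟨g * h, (lyapT_mul g h φ).symm⟩
  have hHinv : ∀ g : G, lyapT g '' convexHull ℝ S ⊆ convexHull ℝ S := by
    intro g
    rw [Set.image_subset_iff]
    exact convexHull_min
      (fun x hx => Set.mem_preimage.2 (subset_convexHull ℝ S (hSinv g ⟨x, hx, rfl⟩)))
      ((convex_convexHull ℝ S).linear_preimage (lyapT g))
  have hCinv : ∀ g : G, lyapT g '' C ⊆ C := by
    intro g
    refine subset_trans (image_closure_subset_closure_image (lyapT_isometry g).continuous) ?_
    exact closure_mono (hHinv g)
  -- Zorn's lemma: a minimal invariant nonempty compact convex set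
  set 𝒮 : Set (Set C(K, ℝ)) :=
    {M | M ⊆ C ∧ M.Nonempty ∧ IsCompact M ∧ Convex ℝ M ∧ ∀ g : G, lyapT g '' M ⊆ M} with h𝒮def
  have hC𝒮 : C ∈ 𝒮 := ⟨Set.Subset.rfl, hCne, hCc, hCconv, hCinv⟩
  have hzorn : ∃ m, m ⊆ C ∧ Minimal (· ∈ 𝒮) m := by
    refine zorn_superset_nonempty 𝒮 ?_ C hC𝒮
    intro c hc𝒮 hchain hcne
    refine ⟨⋂₀ c, ?_, fun s hs => Set.sInter_subset_of_mem hs⟩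
    obtain ⟨s₀, hs₀⟩ := hcne
    have hclosed : IsClosed (⋂₀ c) :=
      isClosed_sInter fun s hs => ((hc𝒮 hs).2.2.1).isClosed
    have hcompact : IsCompact (⋂₀ c) :=
      ((hc𝒮 hs₀).2.2.1).of_isClosed_subset hclosed (Set.sInter_subset_of_mem hs₀)
    have hnonempty : (⋂₀ c).Nonempty := by
      have : Nonempty ↑c := Set.Nonempty.to_subtype ⟨s₀, hs₀⟩
      rw [Set.sInter_eq_iInter]
      refine IsCompact.nonempty_iInter_of_directed_nonempty_isCompact_isClosed _ ?_
        (fun s => (hc𝒮 s.2).2.1) (fun s => (hc𝒮 s.2).2.2.1) (fun s => ((hc𝒮 s.2).2.2.1).isClosed)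
      rintro ⟨s, hs⟩ ⟨t, ht⟩
      rcases eq_or_ne s t with rfl | hst
      · exact ⟨⟨s, hs⟩, Set.Subset.rfl, Set.Subset.rfl⟩
      rcases hchain hs ht hst with h | h
      · exact ⟨⟨s, hs⟩, Set.Subset.rfl, h⟩
      · exact ⟨⟨t, ht⟩, h, Set.Subset.rfl⟩
    refine ⟨(Set.sInter_subset_of_mem hs₀).trans (hc𝒮 hs₀).1, hnonempty, hcompact,
      convex_sInter fun s hs => (hc𝒮 hs).2.2.2.1, fun g => ?_⟩
    rintro _ ⟨p, hp, rfl⟩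
    intro s hs
    exact (hc𝒮 hs).2.2.2.2 g ⟨p, hp s hs, rfl⟩
  obtain ⟨m, hmC, hmmin⟩ := hzorn
  obtain ⟨hm1, hm2, hm3, hm4, hm5⟩ := hmmin.prop
  -- the minimal set is invariant with image exactly m
  have hminv' : ∀ g : G, lyapT g '' m = m := by
    intro g
    refine Set.Subset.antisymm (hm5 g) fun x hx => ?_
    have : lyapT g⁻¹ x ∈ m := hm5 g⁻¹ ⟨x, hx, rfl⟩
    exact ⟨lyapT g⁻¹ x, this, by rw [lyapT_mul, mul_inv_cancel, lyapT_one]⟩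
  -- Kakutani: the minimal set is a single fixed point
  have hms : m.Subsingleton := by
    refine minimal_invariant_subsingleton (E := C(K, ℝ)) (ι := G)
      (fun g : G => lyapT g) (fun g a b => lyapT_dist g a b) hm2 hm3 hm4
      (fun g => hminv' g) ?_
    intro A hAm hAne hAc hAconv hAinv
    exact hmmin.eq_of_le ⟨hAm.trans hm1, hAne, hAc, hAconv, hAinv⟩ hAm
  obtain ⟨φ₁, hφ₁m⟩ := hm2
  have hφ₁fix : ∀ g : G, lyapT g φ₁ = φ₁ := fun g =>
    hms (hm5 g ⟨φ₁, hφ₁m, rfl⟩) hφ₁m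
  refine ⟨φ₁, φ - φ₁, ?_, ?_, by abel⟩
  · intro g x
    have h2 := DFunLike.congr_fun (hφ₁fix g⁻¹) x
    rw [lyapT_apply, inv_inv] at h2
    exact h2
  · intro f hf
    have hconst : C ⊆ {ψ | f ψ = f φ} := by
      refine closure_minimal (convexHull_min ?_ ?_) ?_
      · rintro _ ⟨g, rfl⟩
        exact hf g φ
      · exact convex_hyperplane (IsLinearMap.mk f.map_add f.map_smul) (f φ)
      · exact IsClosed.preimage f.continuous isClosed_singleton
    have hφ₁val : f φ₁ = f φ := hconst (hmC hφ₁m)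
    rw [map_sub, hφ₁val, sub_self]
end

section
/- Suppose a group G acts on a compact metric space K by homeomorphisms, the action is Lyapunov stable, and the orbit of some point a ∈ K is dense in K. Then K carries at most one G-invariant regular Borel probability measure. -/
open MeasureTheory Filter Topology Set
open scoped NNReal ENNReal

namespace LyapAux

variable {K : Type*} [MetricSpace K] [CompactSpace K]

theorem core [MeasurableSpace K] [BorelSpace K]
    (S : Set C(K, K))
    (hcomp : ∀ φ ∈ S, ∀ ψ ∈ S, φ.comp ψ ∈ S)
    (hid : ContinuousMap.id K ∈ S)
    (hinv : ∀ φ ∈ S, ∃ ψ ∈ S,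
      φ.comp ψ = ContinuousMap.id K ∧ ψ.comp φ = ContinuousMap.id K)
    (hTB : TotallyBounded S)
    (a : K) (hdense : Dense ((fun φ : C(K, K) => φ a) '' S))
    (μ ν : Measure K) [IsProbabilityMeasure μ] [IsProbabilityMeasure ν]
    (hμ : ∀ φ ∈ S, ∀ f : C(K, ℝ), ∫ x, f (φ x) ∂μ = ∫ x, f x ∂μ)
    (hν : ∀ φ ∈ S, ∀ f : C(K, ℝ), ∫ x, f (φ x) ∂ν = ∫ x, f x ∂ν) :
    μ = ν := by
  classical
  set T : Set C(K, K) := closure S with hT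
  have hcompcont : Continuous fun p : C(K, K) × C(K, K) => p.1.comp p.2 :=
    ContinuousMap.continuous_comp'.comp continuous_swap
  have hTcomp : ∀ φ ∈ T, ∀ ψ ∈ T, φ.comp ψ ∈ T := by
    intro φ hφ ψ hψ
    exact map_mem_closure₂ hcompcont hφ hψ hcomp
  have hTcompact : IsCompact T :=
    hTB.closure.isCompact_of_isClosed isClosed_closure
  have hTinv : ∀ φ ∈ T, ∃ ψ ∈ T,
      φ.comp ψ = ContinuousMap.id K ∧ ψ.comp φ = ContinuousMap.id K := by
    intro φ hφ
    obtain ⟨u, hu, hlim⟩ := mem_closure_iff_seq_limit.mp hφ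
    choose v hv hv1 hv2 using fun n => hinv (u n) (hu n)
    obtain ⟨ψ, hψT, s, hs, hslim⟩ :=
      hTcompact.tendsto_subseq (fun n => (subset_closure (hv n) : v n ∈ T))
    have hulim : Tendsto (fun k => u (s k)) atTop (𝓝 φ) :=
      hlim.comp hs.tendsto_atTop
    have hpair : Tendsto (fun k => (u (s k), v (s k))) atTop (𝓝 (φ, ψ)) :=
      hulim.prodMk_nhds hslim
    have h1 : Tendsto (fun k => (u (s k)).comp (v (s k))) atTop (𝓝 (φ.comp ψ)) :=
      (hcompcont.tendsto (φ, ψ)).comp hpair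
    have h2 : Tendsto (fun k => (v (s k)).comp (u (s k))) atTop (𝓝 (ψ.comp φ)) :=
      ((hcompcont.comp continuous_swap).tendsto (φ, ψ)).comp hpair
    refine ⟨ψ, hψT, ?_, ?_⟩
    · have : Tendsto (fun _ : ℕ => ContinuousMap.id K) atTop (𝓝 (φ.comp ψ)) := by
        simpa [hv1] using h1
      exact tendsto_nhds_unique this tendsto_const_nhds
    · have : Tendsto (fun _ : ℕ => ContinuousMap.id K) atTop (𝓝 (ψ.comp φ)) := by
        simpa [hv2] using h2
      exact tendsto_nhds_unique this tendsto_const_nhds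
  -- transitivity at `a`
  have htrans : ∀ x : K, ∃ φ ∈ T, φ a = x := by
    have hev : Continuous fun φ : C(K, K) => φ a := continuous_eval_const a
    have himg : IsCompact ((fun φ : C(K, K) => φ a) '' T) := hTcompact.image hev
    have hdense' : Dense ((fun φ : C(K, K) => φ a) '' T) :=
      hdense.mono (Set.image_mono subset_closure)
    have huniv : ((fun φ : C(K, K) => φ a) '' T) = Set.univ := by
      rw [← himg.isClosed.closure_eq]
      exact hdense'.closure_eq
    intro x
    have : x ∈ (fun φ : C(K, K) => φ a) '' T := huniv ▸ Set.mem_univ x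
    obtain ⟨φ, hφ, hφa⟩ := this
    exact ⟨φ, hφ, hφa⟩
  -- the compact group
  haveI : CompactSpace ↥T := isCompact_iff_compactSpace.mp hTcompact
  letI : Group ↥T :=
    { mul := fun h k => ⟨h.1.comp k.1, hTcomp _ h.2 _ k.2⟩
      mul_assoc := fun h k l => Subtype.ext (ContinuousMap.comp_assoc _ _ _)
      one := ⟨ContinuousMap.id K, subset_closure hid⟩
      one_mul := fun h => Subtype.ext (ContinuousMap.id_comp _)
      mul_one := fun h => Subtype.ext (ContinuousMap.comp_id _)
      inv := fun h => ⟨(hTinv h.1 h.2).choose, (hTinv h.1 h.2).choose_spec.1⟩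
      inv_mul_cancel := fun h => Subtype.ext (hTinv h.1 h.2).choose_spec.2.2 }
  haveI : ContinuousMul ↥T := by
    constructor
    apply Continuous.subtype_mk
    exact hcompcont.comp
      ((continuous_subtype_val.comp continuous_fst).prodMk
        (continuous_subtype_val.comp continuous_snd))
  haveI : ContinuousInv ↥T := by
    constructor
    rw [continuous_iff_isClosed]
    intro C hC
    have hΓ : IsClosed {p : ↥T × ↥T | p.1.1.comp p.2.1 = ContinuousMap.id K} :=
      isClosed_eq (hcompcont.comp
        ((continuous_subtype_val.comp continuous_fst).prodMk
          (continuous_subtype_val.comp continuous_snd))) continuous_const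
    have hkey : ((Inv.inv : ↥T → ↥T) ⁻¹' C) =
        Prod.fst '' ({p : ↥T × ↥T | p.1.1.comp p.2.1 = ContinuousMap.id K} ∩
          Set.univ ×ˢ C) := by
      ext h
      constructor
      · intro hh
        refine ⟨(h, h⁻¹), ⟨?_, Set.mem_univ _, hh⟩, rfl⟩
        exact congrArg Subtype.val (mul_inv_cancel h)
      · rintro ⟨⟨h', k⟩, ⟨hΓp, -, hkC⟩, rfl⟩
        have hmul : h' * k = 1 := Subtype.ext hΓp
        have : k = h'⁻¹ := eq_inv_of_mul_eq_one_right hmul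
        simpa [Set.mem_preimage, ← this] using hkC
    rw [hkey]
    exact (((hΓ.inter (isClosed_univ.prod hC)).isCompact).image continuous_fst).isClosed
  haveI : IsTopologicalGroup ↥T := ⟨⟩
  letI : MeasurableSpace ↥T := borel ↥T
  haveI : BorelSpace ↥T := ⟨rfl⟩
  haveI : Nonempty ↥T := ⟨1⟩
  set m : Measure ↥T := Measure.haarMeasure (⊤ : TopologicalSpace.PositiveCompacts ↥T) with hm
  haveI : IsProbabilityMeasure m := by
    constructor
    rw [← TopologicalSpace.PositiveCompacts.coe_top (α := ↥T)]
    exact Measure.haarMeasure_self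
  set m' : Measure ↥T := m.inv with hm'
  haveI : IsProbabilityMeasure m' := by
    constructor
    rw [Measure.inv_apply]
    simp
  -- main computation
  have key : ∀ (ρ : Measure K), IsProbabilityMeasure ρ →
      (∀ φ ∈ S, ∀ f : C(K, ℝ), ∫ x, f (φ x) ∂ρ = ∫ x, f x ∂ρ) →
      ∀ f : C(K, ℝ), ∫ x, f x ∂ρ = ∫ h : ↥T, f (h.1 a) ∂m' := by
    intro ρ hρprob hρ f
    haveI := hρprob
    have hint : ∀ u : C(K, ℝ), Integrable (fun x => u x) ρ := fun u =>
      u.continuous.integrable_of_hasCompactSupport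
        (HasCompactSupport.of_compactSpace _)
    -- continuity of φ ↦ ∫ f (φ x) dρ
    have hΦcont : Continuous fun φ : C(K, K) => ∫ x, f (φ x) ∂ρ := by
      have h1 : Continuous fun φ : C(K, K) => f.comp φ :=
        ContinuousMap.continuous_postcomp f
      have h2 : LipschitzWith 1 fun u : C(K, ℝ) => ∫ x, u x ∂ρ := by
        apply LipschitzWith.of_dist_le_mul
        intro u v
        rw [NNReal.coe_one, one_mul, dist_eq_norm, ← integral_sub (hint u) (hint v)]
        calc ‖∫ x, (u x - v x) ∂ρ‖
            ≤ dist u v * (ρ Set.univ).toReal := by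
              apply norm_integral_le_of_norm_le_const
              filter_upwards with x
              rw [Real.norm_eq_abs, ← Real.dist_eq]
              exact ContinuousMap.dist_apply_le_dist x
          _ = dist u v := by simp
      exact h2.continuous.comp h1
    have hTinvariant : ∀ φ ∈ T, ∫ x, f (φ x) ∂ρ = ∫ x, f x ∂ρ := by
      have hclosed : IsClosed {φ : C(K, K) | ∫ x, f (φ x) ∂ρ = ∫ x, f x ∂ρ} :=
        isClosed_eq hΦcont continuous_const
      intro φ hφ
      exact hclosed.closure_subset_iff.mpr (fun ψ hψ => hρ ψ hψ f) hφ
    -- integrability on the product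
    have hprodcont : Continuous fun p : ↥T × K => f (p.1.1 p.2) := by
      apply f.continuous.comp
      exact continuous_eval.comp
        ((continuous_subtype_val.comp continuous_fst).prodMk continuous_snd)
    have hprodint : Integrable (Function.uncurry fun (h : ↥T) (x : K) => f (h.1 x))
        (m'.prod ρ) := by
      exact hprodcont.integrable_of_hasCompactSupport (HasCompactSupport.of_compactSpace _)
    have hswap :
        ∫ h : ↥T, (∫ x, f (h.1 x) ∂ρ) ∂m' = ∫ x, (∫ h : ↥T, f (h.1 x) ∂m') ∂ρ :=
      integral_integral_swap hprodint
    have hconstfiber : ∀ x : K, ∫ h : ↥T, f (h.1 x) ∂m' = ∫ h : ↥T, f (h.1 a) ∂m' := by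
      intro x
      obtain ⟨φ, hφ, hφa⟩ := htrans x
      set k : ↥T := ⟨φ, hφ⟩ with hk
      have hstep : ∀ h : ↥T, f (h.1 x) = f ((h * k).1 a) := by
        intro h
        have : (h * k).1 a = h.1 x := by
          show h.1 (φ a) = h.1 x
          rw [hφa]
        rw [this]
      calc ∫ h : ↥T, f (h.1 x) ∂m'
          = ∫ h : ↥T, f ((h * k).1 a) ∂m' := by simp_rw [hstep]
        _ = ∫ h : ↥T, f (h.1 a) ∂m' := integral_mul_right_eq_self (fun h : ↥T => f (h.1 a)) k
    calc ∫ x, f x ∂ρ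
        = ∫ h : ↥T, (∫ x, f (h.1 x) ∂ρ) ∂m' := by
          rw [integral_congr_ae (Filter.Eventually.of_forall fun h : ↥T => hTinvariant h.1 h.2)]
          simp
      _ = ∫ x, (∫ h : ↥T, f (h.1 x) ∂m') ∂ρ := hswap
      _ = ∫ x, (∫ h : ↥T, f (h.1 a) ∂m') ∂ρ := by
          simp_rw [hconstfiber]
      _ = ∫ h : ↥T, f (h.1 a) ∂m' := by simp
  have hfeq : ∀ f : C(K, ℝ), ∫ x, f x ∂μ = ∫ x, f x ∂ν := by
    intro f
    rw [key μ inferInstance hμ f, key ν inferInstance hν f]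
  -- conclude
  apply ext_of_forall_lintegral_eq_of_IsFiniteMeasure
  intro f
  have hfc : Continuous fun x => ((f x : ℝ≥0) : ℝ) := NNReal.continuous_coe.comp f.continuous
  have hint : ∀ ρ : Measure K, IsProbabilityMeasure ρ →
      Integrable (fun x => ((f x : ℝ≥0) : ℝ)) ρ := fun ρ hρ =>
    hfc.integrable_of_hasCompactSupport (HasCompactSupport.of_compactSpace _)
  rw [lintegral_coe_eq_integral _ (hint μ inferInstance),
    lintegral_coe_eq_integral _ (hint ν inferInstance)]
  congr 1
  exact hfeq ⟨fun x => ((f x : ℝ≥0) : ℝ), hfc⟩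

end LyapAux

open MeasureTheory

/-- Let a group `G` act by homeomorphisms on a compact metric space `K`, with the
action Lyapunov stable, and suppose the orbit of some point `a ∈ K` is dense. Then
`K` carries at most one `G`-invariant regular Borel probability measure. -/
theorem lyapunov_stable_unique_invariant_measure
    {G K : Type*} [Group G] [MetricSpace K] [CompactSpace K]
    [MeasurableSpace K] [BorelSpace K] [MulAction G K]
    (hcont : ∀ g : G, Continuous fun x : K => g • x)
    (hLS : ∀ ε > (0 : ℝ), ∃ δ > (0 : ℝ),
      ∀ (g : G) (x y : K), dist x y < δ → dist (g • x) (g • y) < ε)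
    (a : K) (hdense : Dense (MulAction.orbit G a))
    (μ ν : Measure K) [IsProbabilityMeasure μ] [IsProbabilityMeasure ν]
    (hμreg : μ.Regular) (hνreg : ν.Regular)
    (hμinv : ∀ (g : G) (E : Set K), MeasurableSet E → μ ((fun x : K => g • x) ⁻¹' E) = μ E)
    (hνinv : ∀ (g : G) (E : Set K), MeasurableSet E → ν ((fun x : K => g • x) ⁻¹' E) = ν E) :
    μ = ν := by
  classical
  set e : G → C(K, K) := fun g => ⟨fun x => g • x, hcont g⟩ with he
  have hcomp : ∀ φ ∈ Set.range e, ∀ ψ ∈ Set.range e, φ.comp ψ ∈ Set.range e := by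
    rintro φ ⟨g, rfl⟩ ψ ⟨g', rfl⟩
    exact ⟨g * g', ContinuousMap.ext fun x => mul_smul g g' x⟩
  have hid : ContinuousMap.id K ∈ Set.range e :=
    ⟨1, ContinuousMap.ext fun x => one_smul G x⟩
  have hinv : ∀ φ ∈ Set.range e, ∃ ψ ∈ Set.range e,
      φ.comp ψ = ContinuousMap.id K ∧ ψ.comp φ = ContinuousMap.id K := by
    rintro φ ⟨g, rfl⟩
    exact ⟨e g⁻¹, ⟨g⁻¹, rfl⟩, ContinuousMap.ext fun x => smul_inv_smul g x,
      ContinuousMap.ext fun x => inv_smul_smul g x⟩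
  have hTB : TotallyBounded (Set.range e) := by
    apply Metric.totallyBounded_of_finite_discretization
    intro ε hε
    obtain ⟨δ, hδpos, hδ⟩ := hLS (ε / 6) (by positivity)
    obtain ⟨s, hsfin, hscov⟩ := (Metric.totallyBounded_iff.mp
      (isCompact_univ : IsCompact (Set.univ : Set K)).totallyBounded) δ hδpos
    obtain ⟨t, htfin, htcov⟩ := (Metric.totallyBounded_iff.mp
      (isCompact_univ : IsCompact (Set.univ : Set K)).totallyBounded) (ε / 6) (by positivity)
    have hpick : ∀ z : K, ∃ y, y ∈ t ∧ dist z y < ε / 6 := by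
      intro z
      have := htcov (Set.mem_univ z)
      simpa [Metric.mem_ball] using this
    letI := hsfin.fintype
    letI := htfin.fintype
    letI : DecidableEq ↥s := Classical.decEq _
    refine ⟨(↥s → ↥t), inferInstance,
      fun φ i => ⟨(hpick (φ.1 i.1)).choose, (hpick (φ.1 i.1)).choose_spec.1⟩, ?_⟩
    intro φ ψ hFeq
    have hle : ∀ x : K, dist (φ.1 x) (ψ.1 x) ≤ 4 * (ε / 6) := by
      intro x
      obtain ⟨z, hz, hxz⟩ : ∃ z, z ∈ s ∧ dist x z < δ := by
        have := hscov (Set.mem_univ x)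
        simpa [Metric.mem_ball] using this
      obtain ⟨g, hg⟩ := φ.2
      obtain ⟨g', hg'⟩ := ψ.2
      have h1 : dist (φ.1 x) (φ.1 z) < ε / 6 := by
        rw [← hg]; exact hδ g x z hxz
      have h2 : dist (ψ.1 x) (ψ.1 z) < ε / 6 := by
        rw [← hg']; exact hδ g' x z hxz
      have h3 : dist (φ.1 z) (ψ.1 z) ≤ ε / 6 + ε / 6 := by
        have hzz := congrFun hFeq ⟨z, hz⟩
        have hy1 := (hpick (φ.1 z)).choose_spec.2
        have hy2 := (hpick (ψ.1 z)).choose_spec.2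
        have hyy : (hpick (φ.1 z)).choose = (hpick (ψ.1 z)).choose := by
          simpa [Subtype.ext_iff] using hzz
        calc dist (φ.1 z) (ψ.1 z)
            ≤ dist (φ.1 z) (hpick (φ.1 z)).choose
              + dist (ψ.1 z) (hpick (φ.1 z)).choose := dist_triangle_right _ _ _
          _ ≤ ε / 6 + ε / 6 := by
              rw [← hyy] at hy2
              exact add_le_add hy1.le hy2.le
      calc dist (φ.1 x) (ψ.1 x)
          ≤ dist (φ.1 x) (φ.1 z) + dist (φ.1 z) (ψ.1 z) + dist (ψ.1 z) (ψ.1 x) :=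
            dist_triangle4 _ _ _ _
        _ ≤ ε / 6 + (ε / 6 + ε / 6) + ε / 6 := by
            rw [dist_comm (ψ.1 z) (ψ.1 x)]
            exact add_le_add (add_le_add h1.le h3) h2.le
        _ = 4 * (ε / 6) := by ring
    have : dist φ.1 ψ.1 ≤ 4 * (ε / 6) :=
      (ContinuousMap.dist_le (by positivity)).mpr hle
    calc dist φ.1 ψ.1 ≤ 4 * (ε / 6) := this
      _ < ε := by linarith
  have him : ((fun φ : C(K, K) => φ a) '' Set.range e) = MulAction.orbit G a := by
    ext z
    constructor
    · rintro ⟨φ, ⟨g, rfl⟩, rfl⟩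
      exact ⟨g, rfl⟩
    · rintro ⟨g, rfl⟩
      exact ⟨e g, ⟨g, rfl⟩, rfl⟩
  have hinvmeas : ∀ (ρ : Measure K),
      (∀ (g : G) (E : Set K), MeasurableSet E → ρ ((fun x : K => g • x) ⁻¹' E) = ρ E) →
      ∀ φ ∈ Set.range e, ∀ f : C(K, ℝ), ∫ x, f (φ x) ∂ρ = ∫ x, f x ∂ρ := by
    intro ρ hρinv φ hφ f
    obtain ⟨g, rfl⟩ := hφ
    have hmap : Measure.map (fun x : K => g • x) ρ = ρ :=
      Measure.ext fun E hE => by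
        rw [Measure.map_apply (hcont g).measurable hE]
        exact hρinv g E hE
    conv_rhs => rw [← hmap]
    rw [integral_map (hcont g).measurable.aemeasurable f.continuous.aestronglyMeasurable]
    rfl
  exact LyapAux.core (Set.range e) hcomp hid hinv hTB a (him ▸ hdense) μ ν
    (hinvmeas μ hμinv) (hinvmeas ν hνinv)
end

section
/- Let π be a representation of a group G on a Banach space X such that every orbit O(x) = {π(g)x : g ∈ G} is precompact in X. Let E ⊆ X* be a bounded, π̄(G)-invariant subset. Then the family of maps {π̄(g)|_E : g ∈ G} from E to E is equicontinuous with respect to the relative weak-* topology on E. -/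
open Filter Topology Metric Set

/-- Basic neighborhoods of `0` in the weak-* topology: finitely many evaluation
constraints. -/
lemma weakDual_nhds_zero_basis {X : Type*} [NormedAddCommGroup X] [NormedSpace ℝ X]
    {V : Set (WeakDual ℝ X)} (hV : V ∈ 𝓝 (0 : WeakDual ℝ X)) :
    ∃ (s : Finset X) (ε : ℝ), 0 < ε ∧
      ∀ f : WeakDual ℝ X, (∀ x ∈ s, |f x| < ε) → f ∈ V := by
  classical
  have h : 𝓝 (0 : WeakDual ℝ X) =
      Filter.comap (fun (f : WeakDual ℝ X) (y : X) => f y)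
        (𝓝 (fun y : X => (0 : WeakDual ℝ X) y)) := nhds_induced _ _
  have h0 : (fun y : X => (0 : WeakDual ℝ X) y) = (fun _ : X => (0 : ℝ)) := by
    funext y; rfl
  rw [h, h0, mem_comap] at hV
  obtain ⟨W, hW, hWV⟩ := hV
  rw [nhds_pi, Filter.mem_pi] at hW
  obtain ⟨I, hIfin, t, ht, htW⟩ := hW
  choose ε hε hball using fun x : X => Metric.mem_nhds_iff.mp (ht x)
  refine ⟨hIfin.toFinset, (insert (1:ℝ) (hIfin.toFinset.image ε)).min'
      (Finset.insert_nonempty _ _), ?_, ?_⟩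
  · apply Finset.lt_min'_iff _ _ |>.mpr
    intro y hy
    rcases Finset.mem_insert.mp hy with rfl | hy
    · norm_num
    · obtain ⟨x, _, rfl⟩ := Finset.mem_image.mp hy
      exact hε x
  · intro f hf
    apply hWV
    apply htW
    intro x hx
    have hxs : x ∈ hIfin.toFinset := hIfin.mem_toFinset.mpr hx
    have h1 : |f x| < ε x := by
      refine lt_of_lt_of_le (hf x hxs) ?_
      exact Finset.min'_le _ _ (Finset.mem_insert_of_mem (Finset.mem_image_of_mem ε hxs))
    have : f x ∈ Metric.ball (0:ℝ) (ε x) := by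
      simpa [Real.dist_eq] using h1
    exact hball x this

/-- Let `π` be a representation of a group `G` on a Banach space `X` with all orbits
precompact (totally bounded), and let `E ⊆ X*` be a bounded `π̄(G)`-invariant subset.
Then the family of maps `{π̄(g)|_E : g ∈ G}` is equicontinuous with respect to the
relative weak-* topology on `E` (the weak-* uniformity being the canonical uniformity
of the weak-* topological additive group structure). -/
theorem dual_restriction_equicontinuous_of_precompact_orbits
    {G X : Type*} [Group G] [NormedAddCommGroup X] [NormedSpace ℝ X] [CompleteSpace X]
    (π : G →* (X ≃L[ℝ] X))
    (horb : ∀ x : X, TotallyBounded {y : X | ∃ g : G, y = π g x})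
    (E : Set (WeakDual ℝ X))
    (hbdd : ∃ M : ℝ, ∀ f ∈ E, ‖WeakDual.toStrongDual f‖ ≤ M)
    (hinv : ∀ (g : G), ∀ f ∈ E,
      StrongDual.toWeakDual
        ((WeakDual.toStrongDual f).comp ((π g⁻¹ : X ≃L[ℝ] X) : X →L[ℝ] X)) ∈ E) :
    letI : UniformSpace (WeakDual ℝ X) := IsTopologicalAddGroup.rightUniformSpace _
    Equicontinuous (fun g : G => fun f : E =>
      StrongDual.toWeakDual
        ((WeakDual.toStrongDual (f : WeakDual ℝ X)).comp
          ((π g⁻¹ : X ≃L[ℝ] X) : X →L[ℝ] X))) := by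
  classical
  intro f₀ U hU
  have hU' : U ∈ Filter.comap
      (fun p : WeakDual ℝ X × WeakDual ℝ X => p.2 - p.1) (𝓝 0) := hU
  obtain ⟨V, hV, hVU⟩ := Filter.mem_comap.mp hU'
  obtain ⟨s, ε, hε, hs⟩ := weakDual_nhds_zero_basis hV
  obtain ⟨M, hM⟩ := hbdd
  set M' : ℝ := max M 1 with hM'def
  have hM'pos : 0 < M' := lt_of_lt_of_le one_pos (le_max_right _ _)
  set δ : ℝ := (ε / 3) / M' with hδdef
  have hδ : 0 < δ := div_pos (by linarith) hM'pos
  choose c hcfin hccov using fun x : X => Metric.totallyBounded_iff.mp (horb x) δ hδ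
  set C : Set X := ⋃ x ∈ (s : Set X), c x with hCdef
  have hCfin : C.Finite := Set.Finite.biUnion s.finite_toSet (fun x _ => hcfin x)
  set N : Set (WeakDual ℝ X) := {f | ∀ y ∈ C, |f y - (f₀ : WeakDual ℝ X) y| < ε / 3}
    with hNdef
  have hN : N ∈ 𝓝 (f₀ : WeakDual ℝ X) := by
    have hNeq : N = ⋂ y ∈ C, {f : WeakDual ℝ X | |f y - (f₀ : WeakDual ℝ X) y| < ε / 3} := by
      ext f; simp [hNdef]
    rw [hNeq]
    refine (Filter.biInter_mem hCfin).mpr fun y _ => ?_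
    have hcont : Continuous fun f : WeakDual ℝ X => |f y - (f₀ : WeakDual ℝ X) y| :=
      ((WeakDual.eval_continuous y).sub continuous_const).abs
    have hopen : IsOpen {f : WeakDual ℝ X | |f y - (f₀ : WeakDual ℝ X) y| < ε / 3} :=
      isOpen_lt hcont continuous_const
    exact hopen.mem_nhds (by simp; linarith)
  rw [nhds_subtype_eq_comap]
  filter_upwards [Filter.preimage_mem_comap hN] with f hf g
  apply hVU
  apply hs
  intro x hx
  -- the point in the orbit
  set z : X := π g⁻¹ x with hzdef
  have hz : z ∈ {y : X | ∃ g' : G, y = π g' x} := ⟨g⁻¹, rfl⟩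
  obtain ⟨y, hyc, hyz⟩ := Set.mem_iUnion₂.mp (hccov x hz)
  have hyC : y ∈ C := Set.mem_biUnion hx hyc
  have hdist : ‖z - y‖ < δ := by
    have := Metric.mem_ball.mp hyz
    rwa [dist_eq_norm] at this
  -- norm bounds
  have hfE : ‖WeakDual.toStrongDual (f : WeakDual ℝ X)‖ ≤ M' :=
    le_trans (hM _ f.2) (le_max_left _ _)
  have hf₀E : ‖WeakDual.toStrongDual (f₀ : WeakDual ℝ X)‖ ≤ M' :=
    le_trans (hM _ f₀.2) (le_max_left _ _)
  have key : ∀ (h : WeakDual ℝ X), ‖WeakDual.toStrongDual h‖ ≤ M' →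
      |h z - h y| ≤ ε / 3 := by
    intro h hh
    have h1 : |h z - h y| = ‖(WeakDual.toStrongDual h) (z - y)‖ := by
      rw [map_sub]
      simp [Real.norm_eq_abs]
    rw [h1]
    calc ‖(WeakDual.toStrongDual h) (z - y)‖
        ≤ ‖WeakDual.toStrongDual h‖ * ‖z - y‖ := ContinuousLinearMap.le_opNorm _ _
      _ ≤ M' * δ := by
          apply mul_le_mul hh hdist.le (norm_nonneg _) (le_trans (norm_nonneg _) hh)
      _ = ε / 3 := by
          rw [hδdef]
          field_simp
  have t1 : |(f : WeakDual ℝ X) z - (f : WeakDual ℝ X) y| ≤ ε / 3 := key _ hfE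
  have t3 : |(f₀ : WeakDual ℝ X) z - (f₀ : WeakDual ℝ X) y| ≤ ε / 3 := key _ hf₀E
  have t2 : |(f : WeakDual ℝ X) y - (f₀ : WeakDual ℝ X) y| < ε / 3 := hf y hyC
  have hgoal : |(f : WeakDual ℝ X) z - (f₀ : WeakDual ℝ X) z| < ε := by
    have habs : |(f : WeakDual ℝ X) z - (f₀ : WeakDual ℝ X) z| ≤
        |(f : WeakDual ℝ X) z - (f : WeakDual ℝ X) y| +
        |(f : WeakDual ℝ X) y - (f₀ : WeakDual ℝ X) y| +
        |(f₀ : WeakDual ℝ X) y - (f₀ : WeakDual ℝ X) z| := by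
      have := abs_sub_abs_le_abs_sub ((f : WeakDual ℝ X) z) ((f₀ : WeakDual ℝ X) z)
      calc |(f : WeakDual ℝ X) z - (f₀ : WeakDual ℝ X) z|
          = |((f : WeakDual ℝ X) z - (f : WeakDual ℝ X) y) +
            ((f : WeakDual ℝ X) y - (f₀ : WeakDual ℝ X) y) +
            ((f₀ : WeakDual ℝ X) y - (f₀ : WeakDual ℝ X) z)| := by ring_nf
        _ ≤ _ := by
            exact le_trans (abs_add_le _ _) (by gcongr; exact abs_add_le _ _)
    have t3' : |(f₀ : WeakDual ℝ X) y - (f₀ : WeakDual ℝ X) z| ≤ ε / 3 := by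
      rwa [abs_sub_comm]
    linarith
  show |_| < ε
  convert hgoal using 2
  rfl
end

section
/- Let a group G act on a compact metric space K by homeomorphisms, and suppose the action is Lyapunov stable. Let π be the induced representation of G on C(K). Then C(K) decomposes as the direct sum of closed subspaces C(K) = C(K)_π ⊕ Ann(C(K)*_π̄), and the corresponding projection P of C(K) onto C(K)_π has norm 1 and satisfies P(φψ) = φ·P(ψ) for all φ ∈ C(K)_π and ψ ∈ C(K) (i.e., P is a conditional expectation onto the subalgebra C(K)_π). -/
open MeasureTheory Set

namespace LyapCE

variable {G K : Type*} [Group G] [MetricSpace K] [CompactSpace K] [Nonempty K] [MulAction G K]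
  [ContinuousConstSMul G K]

/-- the map `g ↦ (x ↦ g • x)` into `C(K,K)` -/
def T (G : Type*) {K : Type*} [Group G] [MetricSpace K] [MulAction G K]
    [ContinuousConstSMul G K] (g : G) : C(K, K) :=
  ⟨fun x => g • x, continuous_const_smul g⟩

@[simp] lemma T_apply (g : G) (x : K) : T G g x = g • x := rfl

/-- the closure of the image of `G` in `C(K,K)` -/
def S (G K : Type*) [Group G] [MetricSpace K] [MulAction G K] [ContinuousConstSMul G K] :
    Set C(K, K) :=
  closure (Set.range (T G (K := K)))

lemma id_mem : ContinuousMap.id K ∈ S G K :=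
  subset_closure ⟨1, by ext x; simp [T]⟩

lemma exists_T_close {f : C(K, K)} (hf : f ∈ S G K) {ε : ℝ} (hε : 0 < ε) :
    ∃ g : G, dist f (T G g) < ε := by
  rcases Metric.mem_closure_iff.1 hf ε hε with ⟨b, ⟨g, rfl⟩, hb⟩
  exact ⟨g, hb⟩

variable (hLS : ∀ ε > (0 : ℝ), ∃ δ > (0 : ℝ),
  ∀ (g : G) (x y : K), dist x y < δ → dist (g • x) (g • y) < ε)

include hLS

lemma eqcont : ∀ ε > (0 : ℝ), ∃ δ > (0 : ℝ), ∀ f ∈ S G K, ∀ x y : K,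
    dist x y < δ → dist (f x) (f y) ≤ ε := by
  intro ε hε
  obtain ⟨δ, hδ, hmod⟩ := hLS (ε / 3) (by positivity)
  refine ⟨δ, hδ, fun f hf x y hxy => ?_⟩
  obtain ⟨g, hg⟩ := exists_T_close hf (show (0:ℝ) < ε / 3 by positivity)
  have h1 : dist (f x) (T G g x) ≤ ε / 3 := le_trans (ContinuousMap.dist_apply_le_dist x) hg.le
  have h2 : dist (f y) (T G g y) ≤ ε / 3 := le_trans (ContinuousMap.dist_apply_le_dist y) hg.le
  have h3 : dist (T G g x) (T G g y) ≤ ε / 3 := (hmod g x y hxy).le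
  have h2' : dist (T G g y) (f y) ≤ ε / 3 := by rwa [dist_comm] at h2
  calc dist (f x) (f y) ≤ dist (f x) (T G g x) + dist (T G g x) (T G g y) + dist (T G g y) (f y) :=
        dist_triangle4 _ _ _ _
    _ ≤ ε / 3 + ε / 3 + ε / 3 := by linarith
    _ = ε := by ring

lemma coeq : ∀ ε > (0 : ℝ), ∃ δ > (0 : ℝ), ∀ f ∈ S G K, ∀ x y : K,
    dist (f x) (f y) < δ → dist x y ≤ ε := by
  intro ε hε
  obtain ⟨δ, hδ, hmod⟩ := hLS ε hε
  refine ⟨δ / 3, by positivity, fun f hf x y hxy => ?_⟩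
  obtain ⟨g, hg⟩ := exists_T_close hf (show (0:ℝ) < δ / 3 by positivity)
  have h1 : dist (f x) (T G g x) ≤ δ / 3 := le_trans (ContinuousMap.dist_apply_le_dist x) hg.le
  have h2 : dist (f y) (T G g y) ≤ δ / 3 := le_trans (ContinuousMap.dist_apply_le_dist y) hg.le
  have h3 : dist (T G g x) (T G g y) < δ := by
    calc dist (T G g x) (T G g y)
        ≤ dist (T G g x) (f x) + dist (f x) (f y) + dist (f y) (T G g y) :=
          dist_triangle4 _ _ _ _
      _ < δ / 3 + δ / 3 + δ / 3 := by
          have h1' : dist (T G g x) (f x) ≤ δ / 3 := by rwa [dist_comm] at h1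
          linarith
      _ = δ := by ring
  have h3' : dist (g • x) (g • y) < δ := h3
  have := hmod g⁻¹ (g • x) (g • y) h3'
  simpa [inv_smul_smul] using this.le

lemma totallyBounded_rangeT : TotallyBounded (Set.range (T G (K := K))) := by
  rw [Metric.totallyBounded_iff]
  intro ε hε
  obtain ⟨δ, hδ, hmod⟩ := hLS (ε / 4) (by positivity)
  obtain ⟨t, -, htfin, htcov⟩ := finite_cover_balls_of_compact (isCompact_univ (X := K)) hδ
  haveI : Fintype t := htfin.fintype
  set Φ : G → (t → K) := fun g i => g • (i : K) with hΦ
  have hVtb : TotallyBounded (Set.range Φ) :=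
    (isCompact_univ (X := t → K)).totallyBounded.subset (subset_univ _)
  obtain ⟨s, hs_sub, hsfin, hscov⟩ := totallyBounded_iff_subset.1 hVtb _
    (Metric.dist_mem_uniformity (show (0:ℝ) < ε / 4 by positivity))
  have hchoice : ∀ c ∈ s, ∃ g : G, Φ g = c := fun c hc => hs_sub hc
  choose gc hgc using hchoice
  haveI := hsfin.to_subtype
  refine ⟨Set.range (fun c : s => T G (gc c.1 c.2)), Set.finite_range _, ?_⟩
  rintro - ⟨g, rfl⟩
  have hmem : Φ g ∈ ⋃ c ∈ s, {x | (x, c) ∈ {p : (t → K) × (t → K) | dist p.1 p.2 < ε / 4}} :=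
    hscov ⟨g, rfl⟩
  simp only [Set.mem_iUnion, Set.mem_setOf_eq] at hmem
  obtain ⟨c, hc, hdc⟩ := hmem
  refine Set.mem_biUnion ⟨⟨c, hc⟩, rfl⟩ ?_
  rw [Metric.mem_ball]
  have key : ∀ x : K, dist (T G g x) (T G (gc c hc) x) ≤ 3 * (ε / 4) := by
    intro x
    have hx : x ∈ ⋃ i ∈ t, Metric.ball i δ := htcov (Set.mem_univ x)
    simp only [Set.mem_iUnion, Metric.mem_ball] at hx
    obtain ⟨i, hi, hxi⟩ := hx
    have e1 : dist (g • x) (g • i) < ε / 4 := hmod g x i hxi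
    have e3 : dist ((gc c hc) • i) ((gc c hc) • x) < ε / 4 := by
      have := hmod (gc c hc) i x (by rwa [dist_comm] at hxi)
      exact this
    have e2 : dist (g • i) ((gc c hc) • i) < ε / 4 := by
      have h1 : Φ g ⟨i, hi⟩ = g • i := rfl
      have h2 : Φ (gc c hc) ⟨i, hi⟩ = (gc c hc) • i := rfl
      have hd : dist (Φ g ⟨i, hi⟩) (c ⟨i, hi⟩) < ε / 4 := by
        refine lt_of_le_of_lt ?_ hdc
        exact dist_le_pi_dist _ _ _
      rw [h1, ← hgc c hc, h2] at hd
      exact hd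
    calc dist (T G g x) (T G (gc c hc) x)
        = dist (g • x) ((gc c hc) • x) := rfl
      _ ≤ dist (g • x) (g • i) + dist (g • i) ((gc c hc) • i)
            + dist ((gc c hc) • i) ((gc c hc) • x) := dist_triangle4 _ _ _ _
      _ ≤ 3 * (ε / 4) := by linarith
  have : dist (T G g : C(K,K)) (T G (gc c hc)) ≤ 3 * (ε / 4) := by
    rw [ContinuousMap.dist_le (show (0:ℝ) ≤ 3 * (ε / 4) by positivity)]
    exact key
  linarith

lemma S_compact : IsCompact (S G K) :=
  TotallyBounded.isCompact_of_isClosed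
    ((totallyBounded_rangeT hLS).closure) isClosed_closure

lemma comp_mem {f h : C(K, K)} (hf : f ∈ S G K) (hh : h ∈ S G K) : f.comp h ∈ S G K := by
  rw [S, Metric.mem_closure_iff]
  intro ε hε
  obtain ⟨δ, hδ, hmod⟩ := eqcont hLS (ε / 3) (by positivity)
  obtain ⟨g₂, hg₂⟩ := exists_T_close hh hδ
  obtain ⟨g₁, hg₁⟩ := exists_T_close hf (show (0:ℝ) < ε / 3 by positivity)
  refine ⟨T G (g₁ * g₂), ⟨g₁ * g₂, rfl⟩, ?_⟩
  have key : ∀ x : K, dist ((f.comp h) x) (T G (g₁ * g₂) x) ≤ ε / 3 + ε / 3 := by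
    intro x
    have e1 : dist (f (h x)) (f (T G g₂ x)) ≤ ε / 3 :=
      hmod f hf _ _ (lt_of_le_of_lt (ContinuousMap.dist_apply_le_dist x) hg₂)
    have e2 : dist (f (T G g₂ x)) (T G g₁ (T G g₂ x)) ≤ ε / 3 :=
      le_trans (ContinuousMap.dist_apply_le_dist _) hg₁.le
    have e3 : T G (g₁ * g₂) x = T G g₁ (T G g₂ x) := by simp [mul_smul]
    calc dist ((f.comp h) x) (T G (g₁ * g₂) x)
        = dist (f (h x)) (T G g₁ (T G g₂ x)) := by rw [e3]; rfl
      _ ≤ dist (f (h x)) (f (T G g₂ x)) + dist (f (T G g₂ x)) (T G g₁ (T G g₂ x)) :=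
          dist_triangle _ _ _
      _ ≤ ε / 3 + ε / 3 := by linarith
  have : dist (f.comp h) (T G (g₁ * g₂)) ≤ ε / 3 + ε / 3 := by
    rw [ContinuousMap.dist_le (show (0:ℝ) ≤ ε / 3 + ε / 3 by positivity)]
    exact key
  linarith

lemma bijective_of_mem {f : C(K, K)} (hf : f ∈ S G K) : Function.Bijective f := by
  constructor
  · intro x y hxy
    have : ∀ ε > (0:ℝ), dist x y ≤ ε := by
      intro ε hε
      obtain ⟨δ, hδ, hco⟩ := coeq hLS ε hε
      exact hco f hf x y (by rw [hxy]; simpa using hδ)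
    have : dist x y ≤ 0 := le_of_forall_gt_imp_ge_of_dense (by
      intro ε hε
      exact this ε hε)
    exact dist_le_zero.1 this
  · intro z
    have hcl : IsClosed (Set.range f) := (isCompact_range f.continuous).isClosed
    have : z ∈ closure (Set.range f) := by
      rw [Metric.mem_closure_iff]
      intro ε hε
      obtain ⟨g, hg⟩ := exists_T_close hf hε
      refine ⟨f (g⁻¹ • z), ⟨_, rfl⟩, ?_⟩
      have hlt : dist (T G g (g⁻¹ • z)) (f (g⁻¹ • z)) < ε := by
        calc dist (T G g (g⁻¹ • z)) (f (g⁻¹ • z))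
            = dist (f (g⁻¹ • z)) (T G g (g⁻¹ • z)) := dist_comm _ _
          _ ≤ dist f (T G g) := ContinuousMap.dist_apply_le_dist _
          _ < ε := hg
      have hz : T G g (g⁻¹ • z) = z := by simp [smul_inv_smul]
      rwa [hz] at hlt
    rw [hcl.closure_eq] at this
    exact this.imp fun x hx => hx

lemma exists_inv {f : C(K, K)} (hf : f ∈ S G K) :
    ∃ k : C(K, K), k ∈ S G K ∧ f.comp k = ContinuousMap.id K ∧ k.comp f = ContinuousMap.id K := by
  have hbij := bijective_of_mem hLS hf
  let e : K ≃ K := Equiv.ofBijective f hbij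
  have hcont : Continuous e := f.continuous
  let homeo : K ≃ₜ K := hcont.homeoOfEquivCompactToT2
  refine ⟨⟨e.symm, homeo.symm.continuous⟩, ?_, ?_, ?_⟩
  · rw [S, Metric.mem_closure_iff]
    intro ε hε
    obtain ⟨δ, hδ, hco⟩ := coeq hLS (ε / 2) (by positivity)
    obtain ⟨g, hg⟩ := exists_T_close hf hδ
    refine ⟨T G g⁻¹, ⟨g⁻¹, rfl⟩, ?_⟩
    have key : ∀ z : K, dist (e.symm z) (T G g⁻¹ z) ≤ ε / 2 := by
      intro z
      have hfa : f (e.symm z) = z := e.apply_symm_apply z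
      have hfb : dist (f (g⁻¹ • z)) (T G g (g⁻¹ • z)) < δ :=
        lt_of_le_of_lt (ContinuousMap.dist_apply_le_dist _) hg
      have hTz : T G g (g⁻¹ • z) = z := by simp [smul_inv_smul]
      have : dist (f (e.symm z)) (f (g⁻¹ • z)) < δ := by
        rw [hfa, dist_comm]
        rwa [hTz] at hfb
      exact hco f hf _ _ this
    have : dist (⟨e.symm, homeo.symm.continuous⟩ : C(K,K)) (T G g⁻¹) ≤ ε / 2 := by
      rw [ContinuousMap.dist_le (show (0:ℝ) ≤ ε / 2 by positivity)]
      exact key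
    linarith
  · ext x; exact e.apply_symm_apply x
  · ext x; exact e.symm_apply_apply x

end LyapCE

namespace LyapCE

variable {G K : Type*} [Group G] [MetricSpace K] [CompactSpace K] [Nonempty K] [MulAction G K]
  [ContinuousConstSMul G K]

/-- The enveloping group, as a type. -/
def H (G K : Type*) [Group G] [MetricSpace K] [CompactSpace K] [Nonempty K] [MulAction G K]
    [ContinuousConstSMul G K]
    (_hLS : ∀ ε > (0 : ℝ), ∃ δ > (0 : ℝ),
      ∀ (g : G) (x y : K), dist x y < δ → dist (g • x) (g • y) < ε) : Type _ :=
  {f : C(K, K) // f ∈ S G K}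

variable (hLS : ∀ ε > (0 : ℝ), ∃ δ > (0 : ℝ),
  ∀ (g : G) (x y : K), dist x y < δ → dist (g • x) (g • y) < ε)

noncomputable instance : MetricSpace (H G K hLS) :=
  inferInstanceAs (MetricSpace {f : C(K, K) // f ∈ S G K})

instance : CompactSpace (H G K hLS) :=
  isCompact_iff_compactSpace.mp (S_compact hLS)

noncomputable instance : Group (H G K hLS) where
  mul f k := ⟨f.1.comp k.1, comp_mem hLS f.2 k.2⟩
  one := ⟨ContinuousMap.id K, id_mem⟩
  inv f := ⟨(exists_inv hLS f.2).choose, (exists_inv hLS f.2).choose_spec.1⟩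
  mul_assoc f k l := Subtype.ext (ContinuousMap.comp_assoc _ _ _)
  one_mul f := Subtype.ext (ContinuousMap.id_comp _)
  mul_one f := Subtype.ext (ContinuousMap.comp_id _)
  inv_mul_cancel f := Subtype.ext (exists_inv hLS f.2).choose_spec.2.2

lemma mul_val (a b : H G K hLS) : (a * b).1 = a.1.comp b.1 := rfl

lemma one_val : (1 : H G K hLS).1 = ContinuousMap.id K := rfl

lemma apply_inv_apply (u : H G K hLS) (z : K) : u.1 ((u⁻¹).1 z) = z := by
  have h : (u * u⁻¹).1 = (1 : H G K hLS).1 := congrArg Subtype.val (mul_inv_cancel u)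
  have := ContinuousMap.congr_fun h z
  exact this

lemma inv_apply_apply (u : H G K hLS) (z : K) : (u⁻¹).1 (u.1 z) = z := by
  have h : (u⁻¹ * u).1 = (1 : H G K hLS).1 := congrArg Subtype.val (inv_mul_cancel u)
  exact ContinuousMap.congr_fun h z

instance : IsTopologicalGroup (H G K hLS) where
  continuous_mul := by
    have hcomp : Continuous fun p : C(K, K) × C(K, K) => p.2.comp p.1 :=
      ContinuousMap.continuous_comp'
    apply Continuous.subtype_mk
    exact hcomp.comp ((continuous_subtype_val.comp continuous_snd).prodMk
      (continuous_subtype_val.comp continuous_fst))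
  continuous_inv := by
    rw [Metric.continuous_iff]
    intro b ε hε
    obtain ⟨δ, hδ, hco⟩ := coeq hLS (ε / 2) (by positivity)
    refine ⟨δ, hδ, fun a ha => ?_⟩
    have key : ∀ z : K, dist ((a⁻¹).1 z) ((b⁻¹).1 z) ≤ ε / 2 := by
      intro z
      have h1 : a.1 ((a⁻¹).1 z) = z := apply_inv_apply hLS a z
      have h2 : b.1 ((b⁻¹).1 z) = z := apply_inv_apply hLS b z
      have : dist (a.1 ((a⁻¹).1 z)) (a.1 ((b⁻¹).1 z)) < δ := by
        rw [h1]
        calc dist z (a.1 ((b⁻¹).1 z)) = dist (b.1 ((b⁻¹).1 z)) (a.1 ((b⁻¹).1 z)) := by rw [h2]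
          _ ≤ dist b.1 a.1 := ContinuousMap.dist_apply_le_dist _
          _ = dist a b := (dist_comm _ _).trans (Subtype.dist_eq a b).symm
          _ < δ := ha
      exact hco a.1 a.2 _ _ this
    have : dist (a⁻¹).1 (b⁻¹).1 ≤ ε / 2 := by
      rw [ContinuousMap.dist_le (show (0:ℝ) ≤ ε / 2 by positivity)]
      exact key
    calc dist a⁻¹ b⁻¹ = dist (a⁻¹).1 (b⁻¹).1 := Subtype.dist_eq _ _
      _ ≤ ε / 2 := this
      _ < ε := by linarith

noncomputable instance : MeasurableSpace (H G K hLS) := borel _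

instance : BorelSpace (H G K hLS) := ⟨rfl⟩

instance : Nonempty (H G K hLS) := ⟨1⟩

/-- Normalized Haar measure on the enveloping group. -/
noncomputable def μH : Measure (H G K hLS) :=
  Measure.haarMeasure (⊤ : TopologicalSpace.PositiveCompacts (H G K hLS))

instance : IsProbabilityMeasure (μH hLS) := by
  constructor
  rw [← TopologicalSpace.PositiveCompacts.coe_top (α := H G K hLS)]
  exact Measure.haarMeasure_self

instance : (μH hLS).IsHaarMeasure := by
  unfold μH; infer_instance

instance : (μH hLS).IsMulRightInvariant := by
  constructor
  intro g
  haveI : IsProbabilityMeasure ((μH hLS).map (· * g)) :=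
    Measure.isProbabilityMeasure_map (continuous_mul_right g).measurable.aemeasurable
  exact Measure.isHaarMeasure_eq_of_isProbabilityMeasure _ _

instance : (μH hLS).IsMulLeftInvariant := by
  unfold μH; infer_instance

/-- the image of `g : G` in the enveloping group -/
def ρ (g : G) : H G K hLS := ⟨T G g, subset_closure ⟨g, rfl⟩⟩

lemma integrable_eval (φ : C(K, ℝ)) (x : K) :
    Integrable (fun u : H G K hLS => φ (u.1 x)) (μH hLS) := by
  have hcont : Continuous fun u : H G K hLS => φ (u.1 x) :=
    φ.continuous.comp ((continuous_eval_const x).comp continuous_subtype_val)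
  exact hcont.integrable_of_hasCompactSupport ((isClosed_tsupport _).isCompact)

lemma integrable_comp (ψ : C(K, ℝ)) :
    Integrable (fun u : H G K hLS => ψ.comp u.1) (μH hLS) := by
  have hcont : Continuous fun u : H G K hLS => ψ.comp u.1 :=
    (ContinuousMap.continuous_postcomp ψ).comp continuous_subtype_val
  exact hcont.integrable_of_hasCompactSupport ((isClosed_tsupport _).isCompact)

/-- The averaged function. -/
noncomputable def PC (φ : C(K, ℝ)) : C(K, ℝ) := by
  refine ⟨fun x => ∫ u : H G K hLS, φ (u.1 x) ∂(μH hLS), ?_⟩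
  rw [Metric.continuous_iff]
  intro x ε hε
  obtain ⟨δφ, hδφ, hφ⟩ := Metric.uniformContinuous_iff.1
    (CompactSpace.uniformContinuous_of_continuous φ.continuous) (ε / 2) (by positivity)
  obtain ⟨δ, hδ, hmod⟩ := eqcont hLS (δφ / 2) (by positivity)
  refine ⟨δ, hδ, fun y hy => ?_⟩
  have key : ∀ u : H G K hLS, ‖φ (u.1 y) - φ (u.1 x)‖ ≤ ε / 2 := by
    intro u
    have h1 : dist (u.1 y) (u.1 x) ≤ δφ / 2 := hmod u.1 u.2 y x hy
    have h2 : dist (φ (u.1 y)) (φ (u.1 x)) < ε / 2 :=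
      hφ (lt_of_le_of_lt h1 (by linarith))
    rw [Real.dist_eq] at h2
    exact h2.le
  have hint : ∀ z : K, Integrable (fun u : H G K hLS => φ (u.1 z)) (μH hLS) :=
    integrable_eval hLS φ
  have : dist (∫ u : H G K hLS, φ (u.1 y) ∂(μH hLS)) (∫ u : H G K hLS, φ (u.1 x) ∂(μH hLS))
      ≤ ε / 2 := by
    rw [dist_eq_norm, ← integral_sub (hint y) (hint x)]
    calc ‖∫ u : H G K hLS, (φ (u.1 y) - φ (u.1 x)) ∂(μH hLS)‖
        ≤ ε / 2 * ((μH hLS) Set.univ).toReal :=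
          norm_integral_le_of_norm_le_const (Filter.Eventually.of_forall key)
      _ = ε / 2 := by simp
  exact lt_of_le_of_lt this (by linarith)

lemma PC_apply (φ : C(K, ℝ)) (x : K) :
    PC hLS φ x = ∫ u : H G K hLS, φ (u.1 x) ∂(μH hLS) := rfl

lemma PC_eq_integral (ψ : C(K, ℝ)) :
    PC hLS ψ = ∫ u : H G K hLS, ψ.comp u.1 ∂(μH hLS) := by
  ext x
  have hcomm := (ContinuousMap.evalCLM ℝ x).integral_comp_comm (integrable_comp hLS ψ)
  calc PC hLS ψ x = ∫ u : H G K hLS, (ContinuousMap.evalCLM ℝ x) (ψ.comp u.1) ∂(μH hLS) := rfl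
    _ = (ContinuousMap.evalCLM ℝ x) (∫ u : H G K hLS, ψ.comp u.1 ∂(μH hLS)) := hcomm
    _ = (∫ u : H G K hLS, ψ.comp u.1 ∂(μH hLS)) x := rfl

lemma PC_smul_comm (u0 : H G K hLS) (φ : C(K, ℝ)) (x : K) :
    ∫ u : H G K hLS, φ ((u * u0).1 x) ∂(μH hLS) = ∫ u : H G K hLS, φ (u.1 x) ∂(μH hLS) :=
  integral_mul_right_eq_self (fun v : H G K hLS => φ (v.1 x)) u0

lemma PC_smul_comm_left (u0 : H G K hLS) (φ : C(K, ℝ)) (x : K) :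
    ∫ u : H G K hLS, φ ((u0 * u).1 x) ∂(μH hLS) = ∫ u : H G K hLS, φ (u.1 x) ∂(μH hLS) :=
  integral_mul_left_eq_self (fun v : H G K hLS => φ (v.1 x)) u0

/-- `P` fixes invariant functions pointwise on `S`. -/
lemma invariant_on_S {φ : C(K, ℝ)} (hφ : ∀ (g : G) (x : K), φ (g • x) = φ x) :
    ∀ f ∈ S G K, ∀ x : K, φ (f x) = φ x := by
  intro f hf x
  have hsub : S G K ⊆ {f : C(K, K) | φ (f x) = φ x} := by
    apply closure_minimal
    · rintro - ⟨g, rfl⟩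
      exact hφ g x
    · exact isClosed_eq (φ.continuous.comp (continuous_eval_const x))
        continuous_const
  exact hsub hf

/-- The projection as a continuous linear map. -/
noncomputable def Pclm : C(K, ℝ) →L[ℝ] C(K, ℝ) := by
  refine LinearMap.mkContinuous
    { toFun := PC hLS
      map_add' := ?_
      map_smul' := ?_ } 1 ?_
  · intro φ ψ
    ext x
    simp only [PC_apply, ContinuousMap.add_apply]
    rw [← integral_add (integrable_eval hLS φ x) (integrable_eval hLS ψ x)]
  · intro c φ
    ext x
    simp only [PC_apply, RingHom.id_apply, ContinuousMap.smul_apply, smul_eq_mul]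
    exact integral_const_mul c _
  · intro φ
    rw [one_mul]
    rw [ContinuousMap.norm_le _ (norm_nonneg φ)]
    intro x
    calc ‖PC hLS φ x‖ = ‖∫ u : H G K hLS, φ (u.1 x) ∂(μH hLS)‖ := rfl
      _ ≤ ‖φ‖ * ((μH hLS) Set.univ).toReal :=
          norm_integral_le_of_norm_le_const (Filter.Eventually.of_forall
            (fun u => φ.norm_coe_le_norm (u.1 x)))
      _ = ‖φ‖ := by simp

lemma Pclm_apply (φ : C(K, ℝ)) : Pclm hLS φ = PC hLS φ := rfl

end LyapCE

open LyapCE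

/-- Main theorem. -/
theorem lyapunov_stable_conditional_expectation
    {G K : Type*} [Group G] [MetricSpace K] [CompactSpace K] [Nonempty K] [MulAction G K]
    [ContinuousConstSMul G K]
    (hLS : ∀ ε > (0 : ℝ), ∃ δ > (0 : ℝ),
      ∀ (g : G) (x y : K), dist x y < δ → dist (g • x) (g • y) < ε) :
    ∃ P : C(K, ℝ) →L[ℝ] C(K, ℝ),
      (∀ (φ : C(K, ℝ)) (g : G) (x : K), (P φ) (g • x) = (P φ) x) ∧
      (∀ φ : C(K, ℝ), (∀ (g : G) (x : K), φ (g • x) = φ x) → P φ = φ) ∧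
      (∀ φ : C(K, ℝ), P φ = 0 ↔
        ∀ f : StrongDual ℝ C(K, ℝ),
          (∀ (g : G) (ψ : C(K, ℝ)),
            f (ψ.comp ⟨fun x : K => g⁻¹ • x, continuous_const_smul _⟩) = f ψ) →
          f φ = 0) ∧
      ‖P‖ = 1 ∧
      (∀ φ ψ : C(K, ℝ), (∀ (g : G) (x : K), φ (g • x) = φ x) → P (φ * ψ) = φ * P ψ) := by
  classical
  refine ⟨Pclm hLS, ?_, ?_, ?_, ?_, ?_⟩
  -- (1) range consists of invariant functions
  · intro φ g x
    rw [Pclm_apply, PC_apply, PC_apply]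
    have : ∀ u : H G K hLS, φ (u.1 (g • x)) = φ ((u * ρ hLS g).1 x) := fun u => rfl
    rw [show (fun u : H G K hLS => φ (u.1 (g • x)))
        = fun u : H G K hLS => φ ((u * ρ hLS g).1 x) from rfl]
    exact PC_smul_comm hLS (ρ hLS g) φ x
  -- (2) fixes invariant functions
  · intro φ hφ
    ext x
    rw [Pclm_apply, PC_apply]
    have : (fun u : H G K hLS => φ (u.1 x)) = fun _ : H G K hLS => φ x := by
      funext u
      exact invariant_on_S hφ u.1 u.2 x
    rw [this, integral_const]
    simp
  -- (3) kernel characterization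
  · intro φ
    constructor
    · intro hP f hf
      -- f ∘ P = f for invariant f
      have hfS : ∀ w : C(K, K), w ∈ S G K → ∀ ψ : C(K, ℝ), f (ψ.comp w) = f ψ := by
        intro w hw ψ
        have hsub : S G K ⊆ {w : C(K, K) | f (ψ.comp w) = f ψ} := by
          apply closure_minimal
          · rintro - ⟨g, rfl⟩
            have := hf g⁻¹ ψ
            simpa [T] using this
          · exact isClosed_eq (f.continuous.comp (ContinuousMap.continuous_postcomp ψ))
              continuous_const
        exact hsub hw
      have hfP : f (Pclm hLS φ) = f φ := by
        rw [Pclm_apply, PC_eq_integral]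
        rw [← f.integral_comp_comm (integrable_comp hLS φ)]
        have : (fun u : H G K hLS => f (φ.comp u.1)) = fun _ : H G K hLS => f φ := by
          funext u
          exact hfS u.1 u.2 φ
        rw [this, integral_const]
        simp
      rw [← hfP, hP, map_zero]
    · intro hf
      ext x
      have hFinv : ∀ (g : G) (ψ : C(K, ℝ)),
          ((ContinuousMap.evalCLM ℝ x).comp (Pclm hLS))
            (ψ.comp ⟨fun y : K => g⁻¹ • y, continuous_const_smul _⟩)
          = ((ContinuousMap.evalCLM ℝ x).comp (Pclm hLS)) ψ := by
        intro g ψ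
        have h1 : (ψ.comp ⟨fun y : K => g⁻¹ • y, continuous_const_smul _⟩) = ψ.comp (T G g⁻¹) :=
          rfl
        show (Pclm hLS (ψ.comp ⟨fun y : K => g⁻¹ • y, continuous_const_smul _⟩)) x
            = (Pclm hLS ψ) x
        rw [h1, Pclm_apply, Pclm_apply, PC_apply, PC_apply]
        have h2 : (fun u : H G K hLS => (ψ.comp (T G g⁻¹)) (u.1 x))
            = fun u : H G K hLS => ψ ((ρ hLS g⁻¹ * u).1 x) := rfl
        rw [h2]
        exact PC_smul_comm_left hLS (ρ hLS g⁻¹) ψ x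
      have := hf ((ContinuousMap.evalCLM ℝ x).comp (Pclm hLS)) hFinv
      simpa using this
  -- (4) norm one
  · have hle : ‖Pclm hLS‖ ≤ 1 := LinearMap.mkContinuous_norm_le _ zero_le_one _
    have hone : Pclm hLS (1 : C(K, ℝ)) = 1 := by
      ext x
      rw [Pclm_apply, PC_apply]
      simp
    have hnorm1 : ‖(1 : C(K, ℝ))‖ = 1 := by
      obtain ⟨x₀⟩ := ‹Nonempty K›
      refine le_antisymm ((ContinuousMap.norm_le _ zero_le_one).2 (fun x => by simp)) ?_
      have := (1 : C(K, ℝ)).norm_coe_le_norm x₀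
      simpa using this
    have hge : 1 ≤ ‖Pclm hLS‖ := by
      have := (Pclm hLS).le_opNorm (1 : C(K, ℝ))
      rw [hone, hnorm1, mul_one] at this
      linarith
    linarith
  -- (5) module property
  · intro φ ψ hφ
    ext x
    rw [Pclm_apply, PC_apply, ContinuousMap.mul_apply, Pclm_apply, PC_apply]
    have h1 : (fun u : H G K hLS => (φ * ψ) (u.1 x)) = fun u : H G K hLS => φ x * ψ (u.1 x) := by
      funext u
      rw [ContinuousMap.mul_apply, invariant_on_S hφ u.1 u.2 x]
    rw [h1, integral_const_mul]
end

section
/- Let a group G act on a compact metric space K by homeomorphisms, and suppose the action is Lyapunov stable. Then for all x, y ∈ K the following are equivalent: (1) φ(x) = φ(y) for every continuous function φ ∈ C(K)_π (i.e., every continuous function constant on all orbits); (2) the orbit closures coincide: closure(O(x)) = closure(O(y)). -/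
open Metric MulAction Pointwise

private lemma lyap_aux {G K : Type*} [Group G] [MetricSpace K] [CompactSpace K]
    [MulAction G K] [ContinuousConstSMul G K]
    (hLS : ∀ ε > (0 : ℝ), ∃ δ > (0 : ℝ),
      ∀ (g : G) (x y : K), dist x y < δ → dist (g • x) (g • y) < ε)
    (p q : K) (hq : q ∉ closure (MulAction.orbit G p)) :
    ∃ φ : C(K, ℝ), (∀ (g : G) (z : K), φ (g • z) = φ z) ∧ φ p ≠ φ q := by
  set S := MulAction.orbit G p with hS
  have hSne : S.Nonempty := ⟨p, MulAction.mem_orbit_self p⟩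
  set F : K → ℝ := fun z => ⨆ g : G, infDist (g • z) S with hF
  have hbdd : ∀ z : K, BddAbove (Set.range fun g : G => infDist (g • z) S) := by
    intro z
    refine ⟨diam (Set.univ : Set K), ?_⟩
    rintro r ⟨g, rfl⟩
    calc infDist (g • z) S ≤ dist (g • z) p :=
          infDist_le_dist_of_mem (MulAction.mem_orbit_self p)
      _ ≤ diam (Set.univ : Set K) :=
          dist_le_diam_of_mem isCompact_univ.isBounded (Set.mem_univ _) (Set.mem_univ _)
  -- key uniform estimate
  have hest : ∀ ε > (0 : ℝ), ∃ δ > (0 : ℝ), ∀ z w : K, dist z w < δ → F z ≤ F w + ε := by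
    intro ε hε
    obtain ⟨δ, hδ, hδ'⟩ := hLS ε hε
    refine ⟨δ, hδ, fun z w hzw => ?_⟩
    refine ciSup_le fun g => ?_
    calc infDist (g • z) S ≤ infDist (g • w) S + dist (g • z) (g • w) :=
          infDist_le_infDist_add_dist
      _ ≤ F w + ε := add_le_add (le_ciSup (hbdd w) g) (le_of_lt (hδ' g z w hzw))
  have hcont : Continuous F := by
    rw [Metric.continuous_iff]
    intro b ε hε
    obtain ⟨δ, hδ, hδ'⟩ := hest (ε / 2) (by linarith)
    refine ⟨δ, hδ, fun a hab => ?_⟩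
    have h1 := hδ' a b hab
    have h2 := hδ' b a (by rwa [dist_comm])
    rw [Real.dist_eq, abs_sub_lt_iff]
    constructor <;> linarith
  have hinv : ∀ (g : G) (z : K), F (g • z) = F z := by
    intro h z
    have hrw : (fun g : G => infDist (g • (h • z)) S) = fun g : G => infDist ((g * h) • z) S := by
      funext g; rw [smul_smul]
    have hbdd' : BddAbove (Set.range fun g : G => infDist ((g * h) • z) S) := by
      have : (Set.range fun g : G => infDist ((g * h) • z) S) ⊆
          Set.range fun g : G => infDist (g • z) S := by
        rintro r ⟨g, rfl⟩; exact ⟨g * h, rfl⟩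
      exact (hbdd z).mono this
    show (⨆ g : G, infDist (g • (h • z)) S) = ⨆ g : G, infDist (g • z) S
    rw [hrw]
    apply le_antisymm
    · exact ciSup_le fun g => le_ciSup (hbdd z) (g * h)
    · refine ciSup_le fun g => ?_
      have : infDist (g • z) S = infDist (((g * h⁻¹) * h) • z) S := by group
      rw [this]
      exact le_ciSup hbdd' (g * h⁻¹)
  have hFp : F p = 0 := by
    have : ∀ g : G, infDist (g • p) S = 0 := fun g =>
      infDist_zero_of_mem (MulAction.mem_orbit p g)
    simp only [hF, this, ciSup_const]
  have hFq : 0 < F q := by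
    have h1 : infDist q S ≠ 0 := by
      intro h0
      exact hq ((Metric.mem_closure_iff_infDist_zero hSne).2 h0)
    have h2 : 0 < infDist q S := lt_of_le_of_ne Metric.infDist_nonneg (Ne.symm h1)
    calc (0 : ℝ) < infDist q S := h2
      _ = infDist ((1 : G) • q) S := by rw [one_smul]
      _ ≤ F q := le_ciSup (hbdd q) 1
  exact ⟨⟨F, hcont⟩, hinv, by simp [hFp]; intro h; rw [← h] at hFq; exact lt_irrefl _ hFq⟩

private lemma lyap_closure_subset {G K : Type*} [Group G] [MetricSpace K]
    [MulAction G K] [ContinuousConstSMul G K] {p q : K}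
    (h : q ∈ closure (MulAction.orbit G p)) :
    closure (MulAction.orbit G q) ⊆ closure (MulAction.orbit G p) := by
  apply closure_minimal _ isClosed_closure
  rintro _ ⟨g, rfl⟩
  have : g • q ∈ g • closure (MulAction.orbit G p) := Set.smul_mem_smul_set h
  rwa [← closure_smul, MulAction.smul_orbit] at this

/-- Let a group `G` act by homeomorphisms on a compact metric space `K`, with the
action Lyapunov stable. Then two points `x, y ∈ K` are not separated by the invariant
continuous functions (those in `C(K)_π`, i.e. constant on orbits) if and only if their
orbit closures coincide. -/
theorem lyapunov_stable_invariant_functions_separate_orbit_closures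
    {G K : Type*} [Group G] [MetricSpace K] [CompactSpace K] [MulAction G K]
    [ContinuousConstSMul G K]
    (hLS : ∀ ε > (0 : ℝ), ∃ δ > (0 : ℝ),
      ∀ (g : G) (x y : K), dist x y < δ → dist (g • x) (g • y) < ε)
    (x y : K) :
    (∀ φ : C(K, ℝ), (∀ (g : G) (z : K), φ (g • z) = φ z) → φ x = φ y) ↔
    closure (MulAction.orbit G x) = closure (MulAction.orbit G y) := by
  constructor
  · intro h1
    by_contra hne
    have hcase : x ∉ closure (MulAction.orbit G y) ∨ y ∉ closure (MulAction.orbit G x) := by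
      by_contra hc
      push_neg at hc
      exact hne (le_antisymm (lyap_closure_subset hc.2) (lyap_closure_subset hc.1)).symm
          |>.elim
    rcases hcase with hx | hy
    · obtain ⟨φ, hinvφ, hφ⟩ := lyap_aux hLS y x hx
      exact hφ (h1 φ hinvφ).symm
    · obtain ⟨φ, hinvφ, hφ⟩ := lyap_aux hLS x y hy
      exact hφ (h1 φ hinvφ)
  · intro h φ hinv
    have hsub : closure (MulAction.orbit G x) ⊆ {z : K | φ z = φ x} := by
      apply closure_minimal _ (isClosed_eq φ.continuous continuous_const)
      rintro _ ⟨g, rfl⟩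
      exact hinv g x
    have hy : y ∈ closure (MulAction.orbit G x) := h ▸ subset_closure (MulAction.mem_orbit_self y)
    exact (hsub hy).symm
end

section
/- Let a group G act on a compact metric space K by homeomorphisms, and suppose the action is Lyapunov stable. Then the action is lower semi-continuous: for every open set U ⊆ K, the set {x ∈ K : there exists u ∈ U with φ(x) = φ(u) for all φ ∈ C(K)_π} is open in K. -/
/-- Let a group `G` act by homeomorphisms on a compact metric space `K`, with the
action Lyapunov stable. Then the action is lower semi-continuous: for every open
`U ⊆ K`, the set of points whose `C(K)_π`-equivalence class meets `U` is open, where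
`x ~ u` iff `φ x = φ u` for every invariant continuous function `φ`. -/
theorem lyapunov_stable_action_lower_semicontinuous
    {G K : Type*} [Group G] [MetricSpace K] [CompactSpace K] [MulAction G K]
    [ContinuousConstSMul G K]
    (hLS : ∀ ε > (0 : ℝ), ∃ δ > (0 : ℝ),
      ∀ (g : G) (x y : K), dist x y < δ → dist (g • x) (g • y) < ε)
    (U : Set K) (hU : IsOpen U) :
    IsOpen {x : K | ∃ u ∈ U,
      ∀ φ : C(K, ℝ), (∀ (g : G) (z : K), φ (g • z) = φ z) → φ x = φ u} := by
  haveI : Nonempty G := ⟨1⟩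
  obtain ⟨C, hC⟩ : ∃ C, ∀ a b : K, dist a b ≤ C :=
    ⟨Metric.diam (Set.univ : Set K), fun a b =>
      Metric.dist_le_diam_of_mem isCompact_univ.isBounded trivial trivial⟩
  set D : K → K → ℝ := fun x y => ⨆ g : G, dist (g • x) (g • y) with hD
  have hbdd : ∀ x y : K, BddAbove (Set.range fun g : G => dist (g • x) (g • y)) :=
    fun x y => ⟨C, by rintro r ⟨g, rfl⟩; exact hC _ _⟩
  have hDd : ∀ x y : K, dist x y ≤ D x y := fun x y => by
    simpa using le_ciSup (hbdd x y) (1 : G)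
  have hD0 : ∀ x y : K, 0 ≤ D x y := fun x y => dist_nonneg.trans (hDd x y)
  have hDle : ∀ {ε : ℝ}, 0 < ε → ∃ δ > (0:ℝ), ∀ x y : K, dist x y < δ → D x y ≤ ε := by
    intro ε hε
    obtain ⟨δ, hδ, h⟩ := hLS ε hε
    exact ⟨δ, hδ, fun x y hxy => ciSup_le fun g => (h g x y hxy).le⟩
  have hDtri : ∀ x y z : K, D x z ≤ D x y + D y z := fun x y z =>
    ciSup_le fun g => (dist_triangle _ (g • y) _).trans
      (add_le_add (le_ciSup (hbdd x y) g) (le_ciSup (hbdd y z) g))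
  have hDsymm : ∀ x y : K, D x y = D y x := fun x y => by
    simp only [hD, dist_comm]
  have hDinv : ∀ (h : G) (x y : K), D (h • x) (h • y) = D x y := by
    intro h x y
    simp only [hD, iSup]
    congr 1
    ext r
    constructor
    · rintro ⟨g, rfl⟩; exact ⟨g * h, by simp [mul_smul]⟩
    · rintro ⟨g, rfl⟩; exact ⟨g * h⁻¹, by simp [mul_smul]⟩
  rw [Metric.isOpen_iff]
  rintro x ⟨u, huU, hx⟩
  obtain ⟨ε, hε, hball⟩ := Metric.isOpen_iff.mp hU u huU
  obtain ⟨δ1, hδ1, h1⟩ := hLS (ε / 2) (by positivity)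
  -- the invariant continuous function measuring distance to the orbit of `u`
  set f : K → ℝ := fun z => ⨅ g : G, D z (g • u) with hf
  have hbb : ∀ z : K, BddBelow (Set.range fun g : G => D z (g • u)) :=
    fun z => ⟨0, by rintro r ⟨g, rfl⟩; exact hD0 _ _⟩
  have hfle : ∀ z z' : K, f z ≤ D z z' + f z' := by
    intro z z'
    have key : ∀ g : G, f z - D z z' ≤ D z' (g • u) := by
      intro g
      have h3 : f z ≤ D z z' + D z' (g • u) :=
        le_trans (ciInf_le (hbb z) g) (hDtri z z' (g • u))
      linarith
    have := le_ciInf key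
    have hfz' : (⨅ g : G, D z' (g • u)) = f z' := rfl
    linarith [hfz' ▸ this]
  have hfc : Continuous f := by
    rw [Metric.continuous_iff]
    intro b ε' hε'
    obtain ⟨δ, hδ, hd⟩ := hDle (half_pos hε')
    refine ⟨δ, hδ, fun a hab => ?_⟩
    have h2 := hfle a b
    have h3 := hfle b a
    rw [hDsymm b a] at h3
    have hD' := hd a b hab
    rw [Real.dist_eq, abs_sub_lt_iff]
    constructor <;> linarith
  have hfinv : ∀ (g : G) (z : K), f (g • z) = f z := by
    intro g z
    simp only [hf, iInf]
    congr 1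
    ext r
    constructor
    · rintro ⟨h, rfl⟩
      refine ⟨g⁻¹ * h, ?_⟩
      show D z ((g⁻¹ * h) • u) = D (g • z) (h • u)
      rw [← hDinv g z ((g⁻¹ * h) • u)]
      congr 1
      simp [mul_smul]
    · rintro ⟨h, rfl⟩
      refine ⟨g * h, ?_⟩
      show D (g • z) ((g * h) • u) = D z (h • u)
      rw [← hDinv g z (h • u)]
      congr 1
      simp [mul_smul]
  have hfu : f u = 0 := by
    refine le_antisymm ?_ (le_ciInf fun g => hD0 _ _)
    have h4 : f u ≤ D u ((1 : G) • u) := ciInf_le (hbb u) 1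
    have h5 : D u ((1 : G) • u) = 0 := by
      simp only [one_smul, hD]
      simp [ciSup_const]
    linarith
  have hfx : f x = 0 := by
    have := hx ⟨f, hfc⟩ hfinv
    simpa [hfu] using this
  have hinf : (⨅ g : G, D x (g • u)) < δ1 / 2 := by
    have : f x < δ1 / 2 := by rw [hfx]; positivity
    exact this
  obtain ⟨g, hg⟩ := exists_lt_of_ciInf_lt hinf
  have hgd : dist x (g • u) < δ1 / 2 := lt_of_le_of_lt (hDd _ _) hg
  refine ⟨δ1 / 2, by positivity, fun x' hx' => ?_⟩
  rw [Metric.mem_ball] at hx'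
  refine ⟨g⁻¹ • x', ?_, fun φ hφ => (hφ g⁻¹ x').symm⟩
  apply hball
  rw [Metric.mem_ball]
  have hxu : dist x' (g • u) < δ1 :=
    (dist_triangle x' x (g • u)).trans_lt (by linarith)
  have := h1 g⁻¹ x' (g • u) hxu
  rw [inv_smul_smul] at this
  linarith
end

section
/- Let a group G act on a compact metric space K by homeomorphisms and let π be the induced representation of G on C(K). Suppose the action is lower semi-continuous: for every open U ⊆ K, the set {x ∈ K : there exists u ∈ U with φ(x) = φ(u) for all φ ∈ C(K)_π} is open. Then C(K)_π is a complemented subspace of C(K), i.e., there exists a bounded linear projection of C(K) onto C(K)_π. -/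
open Filter Topology Set
set_option maxHeartbeats 1000000

/-- Abstract weighted-sum estimate for lists of (weight, value) pairs. -/
lemma abs_sum_pairs (δ y : ℝ) : ∀ L : List (ℝ × ℝ),
    (∀ r ∈ L, 0 ≤ r.1 ∧ (r.1 ≠ 0 → |r.2 - y| ≤ δ)) →
    |(L.map fun r => r.1 * r.2).sum - (L.map fun r => r.1).sum * y|
      ≤ δ * (L.map fun r => r.1).sum
  | [], _ => by simp
  | r :: L, h => by
    simp only [List.map_cons, List.sum_cons]
    have hr := h r (List.mem_cons_self)
    have hL := abs_sum_pairs δ y L (fun r' hr' => h r' (List.mem_cons_of_mem _ hr'))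
    have h1 : |r.1 * r.2 - r.1 * y| ≤ δ * r.1 := by
      rcases eq_or_ne r.1 0 with h0 | h0
      · simp [h0]
      · rw [← mul_sub, abs_mul, abs_of_nonneg hr.1, mul_comm]
        exact mul_le_mul_of_nonneg_right (hr.2 h0) hr.1
    have key : |(r.1 * r.2 + (L.map fun r => r.1 * r.2).sum)
        - (r.1 + (L.map fun r => r.1).sum) * y|
        ≤ |r.1 * r.2 - r.1 * y| + |(L.map fun r => r.1 * r.2).sum
            - (L.map fun r => r.1).sum * y| := by
      have : (r.1 * r.2 + (L.map fun r => r.1 * r.2).sum)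
          - (r.1 + (L.map fun r => r.1).sum) * y
          = (r.1 * r.2 - r.1 * y) + ((L.map fun r => r.1 * r.2).sum
            - (L.map fun r => r.1).sum * y) := by ring
      rw [this]; exact abs_add_le _ _
    calc |(r.1 * r.2 + (L.map fun r => r.1 * r.2).sum)
        - (r.1 + (L.map fun r => r.1).sum) * y| ≤ _ + _ := key
      _ ≤ δ * r.1 + δ * (L.map fun r => r.1).sum := add_le_add h1 hL
      _ = δ * (r.1 + (L.map fun r => r.1).sum) := by ring

section RelMachinery
variable {Q X : Type*} [TopologicalSpace Q] [MetricSpace X]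

/-- `Spl b l l'`: `l'` refines `l`, splitting each atom's weight into pieces whose
points moved at most `b`. -/
def Spl (b : ℝ) : List (C(Q, ℝ) × X) → List (C(Q, ℝ) × X) → Prop
  | [], l' => l' = []
  | p :: rest, l' => ∃ L t, l' = L ++ t ∧ (∀ r ∈ L, dist r.2 p.2 ≤ b) ∧
      (∀ c, (L.map fun r => r.1 c).sum = p.1 c) ∧ Spl b rest t

lemma Spl.refl {b : ℝ} (hb : 0 ≤ b) : ∀ l : List (C(Q, ℝ) × X), Spl b l l
  | [] => rfl
  | p :: rest => ⟨[p], rest, rfl, by simpa using hb, fun c => by simp, Spl.refl hb rest⟩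

lemma Spl.sum {b : ℝ} : ∀ {l l' : List (C(Q, ℝ) × X)}, Spl b l l' →
    ∀ c, (l'.map fun r => r.1 c).sum = (l.map fun p => p.1 c).sum
  | [], l', h, c => by subst h; simp
  | p :: rest, l', h, c => by
    obtain ⟨L, t, rfl, _, hsum, hrest⟩ := h
    simp only [List.map_append, List.sum_append, List.map_cons, List.sum_cons]
    rw [hsum c, Spl.sum hrest c]

lemma Spl.mem {b : ℝ} : ∀ {l l' : List (C(Q, ℝ) × X)}, Spl b l l' →
    ∀ r ∈ l', ∃ p ∈ l, dist r.2 p.2 ≤ b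
  | [], l', h, r, hr => by subst h; simp at hr
  | p :: rest, l', h, r, hr => by
    obtain ⟨L, t, rfl, hdist, _, hrest⟩ := h
    rcases List.mem_append.1 hr with hL | ht
    · exact ⟨p, List.mem_cons_self, hdist r hL⟩
    · obtain ⟨p', hp', hd⟩ := Spl.mem hrest r ht
      exact ⟨p', List.mem_cons_of_mem _ hp', hd⟩

lemma Spl.mono {b b' : ℝ} (hbb : b ≤ b') : ∀ {l l' : List (C(Q, ℝ) × X)},
    Spl b l l' → Spl b' l l'
  | [], _, h => h
  | p :: rest, l', h => by
    obtain ⟨L, t, rfl, hdist, hsum, hrest⟩ := h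
    exact ⟨L, t, rfl, fun r hr => (hdist r hr).trans hbb, hsum, Spl.mono hbb hrest⟩

lemma Spl.split {b : ℝ} : ∀ (L : List (C(Q, ℝ) × X)) {t l'' : List (C(Q, ℝ) × X)},
    Spl b (L ++ t) l'' → ∃ u v, l'' = u ++ v ∧ Spl b L u ∧ Spl b t v
  | [], t, l'', h => ⟨[], l'', rfl, rfl, h⟩
  | r :: L, t, l'', h => by
    obtain ⟨Lr, tr, rfl, hdist, hsum, hrest⟩ := h
    obtain ⟨u, v, rfl, hu, hv⟩ := Spl.split L hrest
    exact ⟨Lr ++ u, v, by rw [List.append_assoc],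
      ⟨Lr, u, rfl, hdist, hsum, hu⟩, hv⟩

lemma Spl.trans {b b' : ℝ} : ∀ {l l' l'' : List (C(Q, ℝ) × X)},
    Spl b l l' → Spl b' l' l'' → Spl (b + b') l l''
  | [], l', l'', h, h' => by subst h; exact h'
  | p :: rest, l', l'', h, h' => by
    obtain ⟨L, t, rfl, hdist, hsum, hrest⟩ := h
    obtain ⟨u, v, rfl, hu, hv⟩ := Spl.split L h'
    refine ⟨u, v, rfl, ?_, ?_, Spl.trans hrest hv⟩
    · intro r hr
      obtain ⟨pL, hpL, hd⟩ := Spl.mem hu r hr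
      calc dist r.2 p.2 ≤ dist r.2 pL.2 + dist pL.2 p.2 := dist_triangle _ _ _
        _ ≤ b' + b := add_le_add hd (hdist pL hpL)
        _ = b + b' := add_comm _ _
    · intro c
      rw [Spl.sum hu c, hsum c]

lemma list_sum_map_add {α : Type*} (l : List α) (f g : α → ℝ) :
    (l.map fun x => f x + g x).sum = (l.map f).sum + (l.map g).sum := by
  induction l with
  | nil => simp
  | cons a l ih => simp [ih]; ring

lemma list_sum_map_mul {α : Type*} (l : List α) (a : ℝ) (f : α → ℝ) :
    (l.map fun x => a * f x).sum = a * (l.map f).sum := by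
  induction l with
  | nil => simp
  | cons b l ih => simp [ih]; ring

/-- The approximating operator value. -/
noncomputable def valL (l : List (C(Q, ℝ) × X)) (φ : C(X, ℝ)) : C(Q, ℝ) :=
  (l.map fun p => p.1 * ContinuousMap.const Q (φ p.2)).sum

lemma valL_apply (l : List (C(Q, ℝ) × X)) (φ : C(X, ℝ)) (c : Q) :
    valL l φ c = (l.map fun p => p.1 c * φ p.2).sum := by
  induction l with
  | nil => simp [valL]
  | cons p l ih =>
    simp only [valL, List.map_cons, List.sum_cons, ContinuousMap.add_apply,
      ContinuousMap.mul_apply, ContinuousMap.const_apply] at ih ⊢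
    rw [ih]

lemma Spl.estimate {b δ : ℝ} {φ : C(X, ℝ)} : ∀ {l l' : List (C(Q, ℝ) × X)},
    Spl b l l' → (∀ r ∈ l', ∀ c, 0 ≤ r.1 c) →
    (∀ a a' : X, dist a a' ≤ b → |φ a - φ a'| ≤ δ) → ∀ c : Q,
    |(l'.map fun r => r.1 c * φ r.2).sum - (l.map fun p => p.1 c * φ p.2).sum|
      ≤ δ * (l.map fun p => p.1 c).sum
  | [], l', h, _, _, c => by subst h; simp
  | p :: rest, l', h, hpos, hφ, c => by
    obtain ⟨L, t, rfl, hdist, hsum, hrest⟩ := h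
    have hL : |(L.map fun r => r.1 c * φ r.2).sum - p.1 c * φ p.2| ≤ δ * p.1 c := by
      have key := abs_sum_pairs δ (φ p.2) (L.map fun r => (r.1 c, φ r.2)) ?_
      · rw [List.map_map, List.map_map] at key
        have e1 : ((fun r : ℝ × ℝ => r.1 * r.2) ∘ fun r : C(Q, ℝ) × X => (r.1 c, φ r.2))
            = fun r : C(Q, ℝ) × X => r.1 c * φ r.2 := rfl
        have e2 : ((fun r : ℝ × ℝ => r.1) ∘ fun r : C(Q, ℝ) × X => (r.1 c, φ r.2))
            = fun r : C(Q, ℝ) × X => r.1 c := rfl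
        rw [e1, e2, hsum c] at key
        exact key
      · rintro r hr
        rw [List.mem_map] at hr
        obtain ⟨r', hr', rfl⟩ := hr
        exact ⟨hpos r' (List.mem_append_left _ hr') c,
          fun _ => hφ r'.2 p.2 (hdist r' hr')⟩
    have ht := Spl.estimate hrest (fun r hr c => hpos r (List.mem_append_right _ hr) c) hφ c
    simp only [List.map_append, List.sum_append, List.map_cons, List.sum_cons]
    have expand : (L.map fun r => r.1 c * φ r.2).sum + (t.map fun r => r.1 c * φ r.2).sum
        - (p.1 c * φ p.2 + (rest.map fun p => p.1 c * φ p.2).sum)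
        = ((L.map fun r => r.1 c * φ r.2).sum - p.1 c * φ p.2)
          + ((t.map fun r => r.1 c * φ r.2).sum - (rest.map fun p => p.1 c * φ p.2).sum) := by
      ring
    calc |(L.map fun r => r.1 c * φ r.2).sum + (t.map fun r => r.1 c * φ r.2).sum
        - (p.1 c * φ p.2 + (rest.map fun p => p.1 c * φ p.2).sum)|
        ≤ |(L.map fun r => r.1 c * φ r.2).sum - p.1 c * φ p.2|
          + |(t.map fun r => r.1 c * φ r.2).sum - (rest.map fun p => p.1 c * φ p.2).sum| := by
          rw [expand]; exact abs_add_le _ _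
      _ ≤ δ * p.1 c + δ * (rest.map fun p => p.1 c).sum := add_le_add hL ht
      _ = δ * (p.1 c + (rest.map fun p => p.1 c).sum) := by ring

end RelMachinery

section Setup
variable (G K : Type*) [Group G] [MetricSpace K] [CompactSpace K] [MulAction G K]
  [ContinuousConstSMul G K]

def InvFun (φ : C(K, ℝ)) : Prop := ∀ (g : G) (z : K), φ (g • z) = φ z

def invSetoid : Setoid K where
  r x y := ∀ φ : C(K, ℝ), InvFun G K φ → φ x = φ y
  iseqv := ⟨fun _ _ _ => rfl, fun h φ hφ => (h φ hφ).symm,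
    fun h1 h2 φ hφ => (h1 φ hφ).trans (h2 φ hφ)⟩

abbrev Qt := Quotient (invSetoid G K)

def qm : C(K, Qt G K) := ⟨Quotient.mk _, continuous_quotient_mk'⟩

variable {G K}

lemma qm_surjective : Function.Surjective (qm G K) := Quotient.exists_rep

lemma qm_smul (g : G) (x : K) : qm G K (g • x) = qm G K x :=
  Quotient.sound fun φ hφ => hφ g x

/-- descend an invariant function to the quotient -/
def descend (φ : C(K, ℝ)) (hφ : InvFun G K φ) : C(Qt G K, ℝ) :=
  ⟨Quotient.lift φ (fun _ _ h => h φ hφ), by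
    rw [continuous_coinduced_dom]; exact φ.continuous⟩

@[simp] lemma descend_qm (φ : C(K, ℝ)) (hφ : InvFun G K φ) (x : K) :
    descend φ hφ (qm G K x) = φ x := rfl

instance : T2Space (Qt G K) := by
  constructor
  intro a b hab
  obtain ⟨x, rfl⟩ := qm_surjective (G := G) a
  obtain ⟨y, rfl⟩ := qm_surjective (G := G) b
  have hxy : ¬ ∀ φ : C(K, ℝ), InvFun G K φ → φ x = φ y := fun h => hab (Quotient.sound h)
  push_neg at hxy
  obtain ⟨φ, hφ, hne⟩ := hxy
  obtain ⟨U, V, hU, hV, haU, hbV, hUV⟩ := t2_separation hne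
  refine ⟨descend φ hφ ⁻¹' U, descend φ hφ ⁻¹' V, (hU.preimage (descend φ hφ).continuous),
    (hV.preimage (descend φ hφ).continuous), haU, hbV, ?_⟩
  exact hUV.preimage _

section WithLSC
variable (hlsc : ∀ U : Set K, IsOpen U → IsOpen {x : K | ∃ u ∈ U,
      ∀ φ : C(K, ℝ), (∀ (g : G) (z : K), φ (g • z) = φ z) → φ x = φ u})

include hlsc

lemma qm_isOpenMap : IsOpenMap (qm G K) := by
  intro U hU
  show IsOpen ((qm G K) ⁻¹' ((qm G K) '' U))
  have : (qm G K) ⁻¹' ((qm G K) '' U) = {x : K | ∃ u ∈ U,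
      ∀ φ : C(K, ℝ), (∀ (g : G) (z : K), φ (g • z) = φ z) → φ x = φ u} := by
    ext x
    simp only [Set.mem_preimage, Set.mem_image, Set.mem_setOf_eq]
    constructor
    · rintro ⟨u, hu, h⟩
      exact ⟨u, hu, fun φ hφ => (Quotient.exact h.symm) φ hφ⟩
    · rintro ⟨u, hu, h⟩
      exact ⟨u, hu, (Quotient.sound (fun φ hφ => (h φ hφ).symm) : _)⟩
  rw [this]
  exact hlsc U hU

/-- The image of a ball, an open saturated neighborhood in the quotient. -/
lemma isOpen_img_ball (z : K) (ε : ℝ) : IsOpen (qm G K '' Metric.ball z ε) :=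
  qm_isOpenMap hlsc _ Metric.isOpen_ball

/-- The key refinement lemma. -/
lemma refine (ρ : C(Qt G K, ℝ)) (z : K) {ε ε' : ℝ} (hε' : 0 < ε')
    (hsupp : ∀ c ∈ tsupport ρ, ∃ y : K, qm G K y = c ∧ dist y z < ε) :
    ∃ l : List (C(Qt G K, ℝ) × K),
      (∀ p ∈ l, ∀ c, 0 ≤ ρ c → 0 ≤ p.1 c) ∧
      (∀ c, (l.map fun p => p.1 c).sum = ρ c) ∧
      (∀ p ∈ l, dist p.2 z < ε) ∧
      (∀ p ∈ l, ∀ c ∈ tsupport p.1, ∃ y : K, qm G K y = c ∧ dist y p.2 < ε') := by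
  classical
  set T := tsupport ρ with hT
  have hTc : IsCompact T := (isClosed_tsupport ρ).isCompact
  -- cover T by images of balls
  have hcov : T ⊆ ⋃ w : K, (if dist w z < ε then qm G K '' Metric.ball w ε' else ∅) := by
    intro c hc
    obtain ⟨y, hqy, hyz⟩ := hsupp c hc
    refine Set.mem_iUnion.2 ⟨y, ?_⟩
    rw [if_pos hyz]
    exact ⟨y, Metric.mem_ball_self hε', hqy⟩
  obtain ⟨t, ht⟩ := hTc.elim_finite_subcover _ (fun w => by
    by_cases h : dist w z < ε
    · rw [if_pos h]; exact isOpen_img_ball hlsc _ _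
    · rw [if_neg h]; exact isOpen_empty) hcov
  set s : Finset K := t.filter (fun w => dist w z < ε) with hs
  have hcov' : T ⊆ ⋃ w ∈ s, qm G K '' Metric.ball w ε' := by
    intro c hc
    obtain ⟨w, hwt, hcw⟩ := Set.mem_iUnion₂.1 (ht hc)
    by_cases hw : dist w z < ε
    · rw [if_pos hw] at hcw
      exact Set.mem_iUnion₂.2 ⟨w, Finset.mem_filter.2 ⟨hwt, hw⟩, hcw⟩
    · rw [if_neg hw] at hcw; exact absurd hcw (Set.notMem_empty c)
  -- partition of unity subordinate to the cover
  have hcov'' : T ⊆ ⋃ w : {w : K // w ∈ s}, qm G K '' Metric.ball w.1 ε' := by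
    intro c hc
    obtain ⟨w, hw, hcw⟩ := Set.mem_iUnion₂.1 (hcov' hc)
    exact Set.mem_iUnion.2 ⟨⟨w, hw⟩, hcw⟩
  obtain ⟨f, hf⟩ := PartitionOfUnity.exists_isSubordinate (isClosed_tsupport ρ)
    (fun w : {w : K // w ∈ s} => qm G K '' Metric.ball w.1 ε')
    (fun w => isOpen_img_ball hlsc _ _) hcov''
  refine ⟨(Finset.univ : Finset {w : K // w ∈ s}).toList.map
      (fun w => (ρ * (f w : C(Qt G K, ℝ)), w.1)), ?_, ?_, ?_, ?_⟩
  · rintro p hp c hc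
    simp only [List.mem_map] at hp
    obtain ⟨w, _, rfl⟩ := hp
    exact mul_nonneg hc (f.nonneg w c)
  · intro c
    rw [List.map_map]
    have heq : ((fun p : C(Qt G K, ℝ) × K => p.1 c) ∘ fun w : {w : K // w ∈ s} =>
        (ρ * (f w : C(Qt G K, ℝ)), w.1)) = fun w : {w : K // w ∈ s} => ρ c * f w c := by
      funext w; simp
    rw [heq, Finset.sum_map_toList, ← Finset.mul_sum]
    by_cases hc : c ∈ T
    · have h1 : ∑ᶠ w, f w c = 1 := f.sum_eq_one hc
      rw [finsum_eq_sum_of_fintype] at h1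
      rw [h1, mul_one]
    · have hρ : ρ c = 0 := image_eq_zero_of_notMem_tsupport hc
      rw [hρ, zero_mul]
  · rintro p hp
    simp only [List.mem_map] at hp
    obtain ⟨w, _, rfl⟩ := hp
    exact (Finset.mem_filter.1 w.2).2
  · rintro p hp c hc
    simp only [List.mem_map] at hp
    obtain ⟨w, _, rfl⟩ := hp
    have hsub : tsupport ((ρ * (f w : C(Qt G K, ℝ)) : C(Qt G K, ℝ)) : Qt G K → ℝ)
        ⊆ tsupport (f w) := by
      apply closure_mono
      intro c hc
      simp only [Function.mem_support, ContinuousMap.mul_apply] at hc ⊢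
      intro h0
      exact hc (by simp [h0])
    have := hf w (hsub hc)
    obtain ⟨y, hy, hqy⟩ := this
    exact ⟨y, hqy, by simpa [dist_comm] using hy⟩

/-- Split off one step on each atom of a list. -/
lemma step_exists {ε ε' : ℝ} (hε' : 0 < ε') :
    ∀ l : List (C(Qt G K, ℝ) × K),
    (∀ p ∈ l, ∀ c, 0 ≤ p.1 c) →
    (∀ p ∈ l, ∀ c ∈ tsupport p.1, ∃ y : K, qm G K y = c ∧ dist y p.2 < ε) →
    ∃ l', Spl ε l l' ∧ (∀ r ∈ l', ∀ c, 0 ≤ r.1 c) ∧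
      (∀ r ∈ l', ∀ c ∈ tsupport r.1, ∃ y : K, qm G K y = c ∧ dist y r.2 < ε')
  | [], _, _ => ⟨[], rfl, by simp, by simp⟩
  | p :: rest, hpos, hsupp => by
    obtain ⟨L, hLpos, hLsum, hLdist, hLsupp⟩ :=
      refine hlsc p.1 p.2 hε' (hsupp p (List.mem_cons_self))
    obtain ⟨t, hrel, htpos, htsupp⟩ := step_exists hε' rest
      (fun p' hp' => hpos p' (List.mem_cons_of_mem _ hp'))
      (fun p' hp' => hsupp p' (List.mem_cons_of_mem _ hp'))
    refine ⟨L ++ t, ⟨L, t, rfl, fun r hr => (hLdist r hr).le, hLsum, hrel⟩, ?_, ?_⟩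
    · intro r hr c
      rcases List.mem_append.1 hr with h | h
      · exact hLpos r h c (hpos p (List.mem_cons_self) c)
      · exact htpos r h c
    · intro r hr c hc
      rcases List.mem_append.1 hr with h | h
      · exact hLsupp r h c hc
      · exact htsupp r h c hc

variable (z₀ : K) (R : ℝ)

/-- scale at step `n` -/
noncomputable def epsF (n : ℕ) : ℝ := R / 2 ^ n

omit hlsc in
lemma epsF_pos (hR : 0 < R) (n : ℕ) : 0 < epsF R n := by
  have : (0:ℝ) < 2 ^ n := by positivity
  exact div_pos hR this

omit hlsc in
lemma epsF_succ (n : ℕ) : epsF R n = 2 * epsF R (n + 1) := by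
  rw [epsF, epsF, pow_succ]
  field_simp

omit hlsc in
lemma epsF_anti (hR : 0 < R) {n m : ℕ} (h : n ≤ m) : epsF R m ≤ epsF R n := by
  apply div_le_div_of_nonneg_left hR.le (by positivity)
  exact pow_le_pow_right₀ (by norm_num) h

noncomputable def stepF (l : List (C(Qt G K, ℝ) × K)) (ε ε' : ℝ) :
    List (C(Qt G K, ℝ) × K) := by
  classical
  exact if h : 0 < ε' ∧ (∀ p ∈ l, ∀ c, 0 ≤ p.1 c) ∧
      (∀ p ∈ l, ∀ c ∈ tsupport p.1, ∃ y : K, qm G K y = c ∧ dist y p.2 < ε)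
  then (step_exists hlsc h.1 l h.2.1 h.2.2).choose else l

noncomputable def seqF : ℕ → List (C(Qt G K, ℝ) × K)
  | 0 => [(1, z₀)]
  | n + 1 => stepF hlsc (seqF n) (epsF R n) (epsF R (n + 1))

/-- the basic invariants of `seqF` -/
def GoodAt (ε : ℝ) (l : List (C(Qt G K, ℝ) × K)) : Prop :=
  (∀ p ∈ l, ∀ c, 0 ≤ p.1 c) ∧ (∀ c, (l.map fun p => p.1 c).sum = 1) ∧
  (∀ p ∈ l, ∀ c ∈ tsupport p.1, ∃ y : K, qm G K y = c ∧ dist y p.2 < ε)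

lemma seqF_good (hR0 : 0 < R) (hR : ∀ y : K, dist y z₀ < R) :
    ∀ n, GoodAt (epsF R n) (seqF hlsc z₀ R n) ∧
      Spl (epsF R n) (seqF hlsc z₀ R n) (seqF hlsc z₀ R (n + 1)) := by
  have good0 : GoodAt (epsF R 0) (seqF hlsc z₀ R 0) := by
    refine ⟨?_, ?_, ?_⟩
    · rintro p hp c
      simp only [seqF, List.mem_singleton] at hp
      subst hp; norm_num
    · intro c; simp [seqF]
    · rintro p hp c _
      simp only [seqF, List.mem_singleton] at hp
      subst hp
      obtain ⟨y, hy⟩ := qm_surjective (G := G) c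
      refine ⟨y, hy, ?_⟩
      simpa [epsF] using hR y
  have key : ∀ n, GoodAt (epsF R n) (seqF hlsc z₀ R n) →
      GoodAt (epsF R (n + 1)) (seqF hlsc z₀ R (n + 1)) ∧
      Spl (epsF R n) (seqF hlsc z₀ R n) (seqF hlsc z₀ R (n + 1)) := by
    intro n hg
    obtain ⟨hpos, hsum, hsupp⟩ := hg
    have hcond : 0 < epsF R (n + 1) ∧ _ ∧ _ := ⟨epsF_pos R hR0 (n + 1), hpos, hsupp⟩
    have hstep : seqF hlsc z₀ R (n + 1) =
        (step_exists hlsc hcond.1 (seqF hlsc z₀ R n) hcond.2.1 hcond.2.2).choose := by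
      show stepF hlsc _ _ _ = _
      rw [stepF, dif_pos hcond]
    obtain ⟨hrel, hpos', hsupp'⟩ :=
      (step_exists hlsc hcond.1 (seqF hlsc z₀ R n) hcond.2.1 hcond.2.2).choose_spec
    rw [← hstep] at hrel hpos' hsupp'
    exact ⟨⟨hpos', fun c => (Spl.sum hrel c).trans (hsum c), hsupp'⟩, hrel⟩
  intro n
  induction n with
  | zero => exact ⟨good0, (key 0 good0).2⟩
  | succ n ih => exact ⟨(key n ih.1).1, (key (n + 1) (key n ih.1).1).2⟩

lemma seqF_spl_many (hR0 : 0 < R) (hR : ∀ y : K, dist y z₀ < R) (n : ℕ) :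
    ∀ m, Spl (2 * epsF R n - 2 * epsF R (n + m)) (seqF hlsc z₀ R n)
      (seqF hlsc z₀ R (n + m)) := by
  intro m
  induction m with
  | zero => simpa using Spl.refl le_rfl _
  | succ m ih =>
    have h1 := (seqF_good hlsc z₀ R hR0 hR (n + m)).2
    have h2 := Spl.trans ih h1
    have heq : 2 * epsF R n - 2 * epsF R (n + m) + epsF R (n + m)
        = 2 * epsF R n - 2 * epsF R (n + (m + 1)) := by
      have := epsF_succ R (n + m)
      have h3 : n + (m + 1) = (n + m) + 1 := by ring
      rw [h3, this]; ring
    rwa [heq] at h2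

lemma seqF_spl (hR0 : 0 < R) (hR : ∀ y : K, dist y z₀ < R) {n m : ℕ} (h : n ≤ m) :
    Spl (2 * epsF R n) (seqF hlsc z₀ R n) (seqF hlsc z₀ R m) := by
  obtain ⟨k, rfl⟩ := Nat.exists_eq_add_of_le h
  exact (seqF_spl_many hlsc z₀ R hR0 hR n k).mono
    (by linarith [epsF_pos R hR0 (n + k)])

omit hlsc in
lemma val_near_inv {ε δ : ℝ} {φ : C(K, ℝ)} (hφ : InvFun G K φ)
    {l : List (C(Qt G K, ℝ) × K)}
    (hpos : ∀ p ∈ l, ∀ c, 0 ≤ p.1 c)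
    (hsum : ∀ c, (l.map fun p => p.1 c).sum = 1)
    (hsupp : ∀ p ∈ l, ∀ c ∈ tsupport p.1, ∃ y : K, qm G K y = c ∧ dist y p.2 < ε)
    (hmod : ∀ a a' : K, dist a a' ≤ ε → |φ a - φ a'| ≤ δ) (x : K) :
    |(l.map fun p => p.1 (qm G K x) * φ p.2).sum - φ x| ≤ δ := by
  have key := abs_sum_pairs δ (φ x) (l.map fun p => (p.1 (qm G K x), φ p.2)) ?_
  · rw [List.map_map, List.map_map] at key
    have e1 : ((fun r : ℝ × ℝ => r.1 * r.2) ∘ fun p : C(Qt G K, ℝ) × K =>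
        (p.1 (qm G K x), φ p.2)) = fun p : C(Qt G K, ℝ) × K => p.1 (qm G K x) * φ p.2 := rfl
    have e2 : ((fun r : ℝ × ℝ => r.1) ∘ fun p : C(Qt G K, ℝ) × K =>
        (p.1 (qm G K x), φ p.2)) = fun p : C(Qt G K, ℝ) × K => p.1 (qm G K x) := rfl
    rw [e1, e2, hsum (qm G K x)] at key
    simpa using key
  · rintro r hr
    rw [List.mem_map] at hr
    obtain ⟨p, hp, rfl⟩ := hr
    refine ⟨hpos p hp _, fun h0 => ?_⟩
    have hc : qm G K x ∈ tsupport p.1 := subset_closure (Function.mem_support.2 h0)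
    obtain ⟨y, hqy, hd⟩ := hsupp p hp _ hc
    have hyx : φ y = φ x := (Quotient.exact hqy) φ hφ
    rw [← hyx]
    exact hmod p.2 y (by rw [dist_comm]; exact hd.le)

end WithLSC
end Setup

/-- Let a group `G` act by homeomorphisms on a compact metric space `K`, and let `π`
be the induced representation on `C(K)`. If the action is lower semi-continuous (for
every open `U ⊆ K` the set of points whose `C(K)_π`-equivalence class meets `U` is
open), then `C(K)_π` is complemented in `C(K)`: there is a bounded linear projection
of `C(K)` onto the subspace of invariant functions. -/
theorem lower_semicontinuous_action_invariant_functions_complemented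
    {G K : Type*} [Group G] [MetricSpace K] [CompactSpace K] [MulAction G K]
    [ContinuousConstSMul G K]
    (hlsc : ∀ U : Set K, IsOpen U → IsOpen {x : K | ∃ u ∈ U,
      ∀ φ : C(K, ℝ), (∀ (g : G) (z : K), φ (g • z) = φ z) → φ x = φ u}) :
    ∃ P : C(K, ℝ) →L[ℝ] C(K, ℝ),
      (∀ (φ : C(K, ℝ)) (g : G) (x : K), (P φ) (g • x) = (P φ) x) ∧
      (∀ φ : C(K, ℝ), (∀ (g : G) (x : K), φ (g • x) = φ x) → P φ = φ) := by
  classical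
  rcases isEmpty_or_nonempty K with hK | hK
  · exact ⟨ContinuousLinearMap.id ℝ _, fun φ g x => (hK.false x).elim, fun φ _ => rfl⟩
  obtain ⟨z₀⟩ := hK
  obtain ⟨R, hR0, hR⟩ : ∃ R : ℝ, 0 < R ∧ ∀ y : K, dist y z₀ < R := by
    obtain ⟨r, hr⟩ := (isCompact_univ (X := K)).isBounded.subset_closedBall z₀
    refine ⟨|r| + 1, by positivity, fun y => ?_⟩
    have h1 : dist y z₀ ≤ r := Metric.mem_closedBall.1 (hr (Set.mem_univ y))
    calc dist y z₀ ≤ r := h1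
      _ ≤ |r| := le_abs_self r
      _ < |r| + 1 := by linarith
  set v : C(K, ℝ) → ℕ → C(Qt G K, ℝ) :=
    fun φ n => valL (seqF hlsc z₀ R n) φ with hv
  have hgood : ∀ n, GoodAt (epsF R n) (seqF hlsc z₀ R n) :=
    fun n => (seqF_good hlsc z₀ R hR0 hR n).1
  -- uniform-continuity modulus
  have hmod : ∀ (φ : C(K, ℝ)) (δ : ℝ), 0 < δ →
      ∃ N : ℕ, ∀ a a' : K, dist a a' ≤ 2 * epsF R N → |φ a - φ a'| ≤ δ := by
    intro φ δ hδ
    obtain ⟨η, hη0, hη⟩ := Metric.uniformContinuous_iff.1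
      (CompactSpace.uniformContinuous_of_continuous φ.continuous) δ hδ
    obtain ⟨N, hN⟩ := exists_pow_lt_of_lt_one
      (show (0:ℝ) < η / (2 * R) by positivity) (show (2⁻¹ : ℝ) < 1 by norm_num)
    refine ⟨N, fun a a' hd => ?_⟩
    have h2 : 2 * epsF R N < η := by
      have h4 : ((2:ℝ) ^ N)⁻¹ < η / (2 * R) := by rwa [inv_pow] at hN
      have h5 : ((2:ℝ) ^ N)⁻¹ * (2 * R) < η := (lt_div_iff₀ (by positivity)).1 h4
      have h6 : 2 * epsF R N = ((2:ℝ) ^ N)⁻¹ * (2 * R) := by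
        rw [epsF]; field_simp
      rw [h6]; exact h5
    have := hη (lt_of_le_of_lt hd h2)
    rw [Real.dist_eq] at this
    exact this.le
  have hcauchy : ∀ φ, CauchySeq (v φ) := by
    intro φ
    rw [Metric.cauchySeq_iff']
    intro δ hδ
    obtain ⟨N, hN⟩ := hmod φ (δ / 2) (by linarith)
    refine ⟨N, fun n hn => ?_⟩
    have hspl := seqF_spl hlsc z₀ R hR0 hR hn
    have hle : dist (v φ n) (v φ N) ≤ δ / 2 := by
      rw [ContinuousMap.dist_le (by linarith)]
      intro c
      rw [Real.dist_eq, hv]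
      simp only [valL_apply]
      have key := Spl.estimate hspl (hgood n).1 hN c
      rw [(hgood N).2.1 c, mul_one] at key
      exact key
    linarith
  have hconv : ∀ φ, ∃ F : C(Qt G K, ℝ), Tendsto (v φ) atTop (𝓝 F) :=
    fun φ => cauchySeq_tendsto_of_complete (hcauchy φ)
  choose Lm hLm using hconv
  have hvb : ∀ φ n, ‖v φ n‖ ≤ ‖φ‖ := by
    intro φ n
    rw [ContinuousMap.norm_le _ (norm_nonneg φ)]
    intro c
    rw [Real.norm_eq_abs, hv]
    simp only [valL_apply]
    have key := abs_sum_pairs ‖φ‖ 0 ((seqF hlsc z₀ R n).map fun p => (p.1 c, φ p.2)) ?_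
    · rw [List.map_map, List.map_map] at key
      have e1 : ((fun r : ℝ × ℝ => r.1 * r.2) ∘ fun p : C(Qt G K, ℝ) × K =>
          (p.1 c, φ p.2)) = fun p : C(Qt G K, ℝ) × K => p.1 c * φ p.2 := rfl
      have e2 : ((fun r : ℝ × ℝ => r.1) ∘ fun p : C(Qt G K, ℝ) × K =>
          (p.1 c, φ p.2)) = fun p : C(Qt G K, ℝ) × K => p.1 c := rfl
      rw [e1, e2, (hgood n).2.1 c] at key
      simpa using key
    · rintro r hr
      rw [List.mem_map] at hr
      obtain ⟨p, hp, rfl⟩ := hr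
      refine ⟨(hgood n).1 p hp _, fun _ => ?_⟩
      rw [sub_zero]
      calc |φ p.2| = ‖φ p.2‖ := rfl
        _ ≤ ‖φ‖ := φ.norm_coe_le_norm p.2
  have hLb : ∀ φ, ‖Lm φ‖ ≤ ‖φ‖ :=
    fun φ => le_of_tendsto (hLm φ).norm (Eventually.of_forall (hvb φ))
  have hadd : ∀ φ ψ, Lm (φ + ψ) = Lm φ + Lm ψ := by
    intro φ ψ
    refine tendsto_nhds_unique (hLm (φ + ψ)) ?_
    have he : v (φ + ψ) = fun n => v φ n + v ψ n := by
      funext n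
      ext c
      simp only [hv, valL_apply, ContinuousMap.add_apply, mul_add]
      exact list_sum_map_add _ _ _
    rw [he]
    exact (hLm φ).add (hLm ψ)
  have hsmul : ∀ (a : ℝ) (φ : C(K, ℝ)), Lm (a • φ) = a • Lm φ := by
    intro a φ
    refine tendsto_nhds_unique (hLm (a • φ)) ?_
    have he : v (a • φ) = fun n => a • v φ n := by
      funext n
      ext c
      simp only [hv, valL_apply, ContinuousMap.smul_apply, smul_eq_mul]
      rw [← list_sum_map_mul]
      congr 1
      apply List.map_congr_left
      intro p _
      ring
    rw [he]
    exact (hLm φ).const_smul a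
  set P0 : C(K, ℝ) →ₗ[ℝ] C(K, ℝ) :=
    { toFun := fun φ => (Lm φ).comp (qm G K)
      map_add' := by
        intro φ ψ
        show (Lm (φ + ψ)).comp (qm G K) = (Lm φ).comp (qm G K) + (Lm ψ).comp (qm G K)
        rw [hadd]
        rfl
      map_smul' := by
        intro a φ
        show (Lm (a • φ)).comp (qm G K) = a • (Lm φ).comp (qm G K)
        rw [hsmul]
        rfl } with hP0
  have hP0b : ∀ φ, ‖P0 φ‖ ≤ 1 * ‖φ‖ := by
    intro φ
    rw [one_mul]
    refine le_trans ?_ (hLb φ)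
    rw [ContinuousMap.norm_le _ (norm_nonneg _)]
    intro x
    exact (Lm φ).norm_coe_le_norm (qm G K x)
  refine ⟨P0.mkContinuous 1 hP0b, ?_, ?_⟩
  · intro φ g x
    show (Lm φ) (qm G K (g • x)) = (Lm φ) (qm G K x)
    rw [qm_smul]
  · intro φ hφ
    show (Lm φ).comp (qm G K) = φ
    ext x
    show (Lm φ) (qm G K x) = φ x
    have heval : Tendsto (fun n => v φ n (qm G K x)) atTop (𝓝 ((Lm φ) (qm G K x))) :=
      ((continuous_eval_const (qm G K x)).tendsto _).comp (hLm φ)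
    refine tendsto_nhds_unique heval ?_
    rw [Metric.tendsto_atTop]
    intro δ hδ
    obtain ⟨N, hN⟩ := hmod φ (δ / 2) (by linarith)
    refine ⟨N, fun n hn => ?_⟩
    have hmod' : ∀ a a' : K, dist a a' ≤ epsF R n → |φ a - φ a'| ≤ δ / 2 := by
      intro a a' hd
      refine hN a a' (hd.trans ?_)
      calc epsF R n ≤ epsF R N := epsF_anti R hR0 hn
        _ ≤ 2 * epsF R N := by linarith [epsF_pos R hR0 N]
    have key := val_near_inv (φ := φ) hφ (hgood n).1 (hgood n).2.1 (hgood n).2.2 hmod' x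
    rw [Real.dist_eq, hv]
    simp only [valL_apply]
    calc |(((seqF hlsc z₀ R n).map fun p => p.1 ((qm G K) x) * φ p.2).sum) - φ x| ≤ δ / 2 := key
      _ < δ := by linarith
end

section
/- Let G be the multiplicative group of positive rationals acting on K = [0,1] by q·x = x^q, and let π be the induced representation of G on C([0,1]) given by (π(q)φ)(x) = φ(x^{1/q}). Then: (1) C(K)_π equals the subspace of constant functions; (2) both Y₁ = {φ ∈ C(K) : φ(0) = 0} and Y₂ = {φ ∈ C(K) : φ(1) = 0} are closed π(G)-invariant subspaces satisfying C(K) = C(K)_π ⊕ Yᵢ; and (3) Y₁ ≠ Y₂. In particular, a π(G)-invariant complement of the subspace of invariant vectors need not be unique. -/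
/-- The unit interval `[0, 1]`. -/
def I01 : Set ℝ := Set.Icc (0 : ℝ) 1

/-- For a positive rational `q`, the map `x ↦ x ^ q` of `[0, 1]` into itself, as a
continuous map. The action of the multiplicative group `ℚ₊` of positive rationals on
`[0, 1]` is `q • x = x ^ q`, and the induced representation `π` of `ℚ₊` on `C([0,1])`
is `(π q φ) x = φ (x ^ (1/q)) = (φ.comp (powMap q⁻¹)) x`; as `q` runs over all
positive rationals, the operators `φ ↦ φ.comp (powMap q)` are exactly the operators
`π q`. -/
noncomputable def powMap (q : {q : ℚ // 0 < q}) : C(↥I01, ↥I01) :=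
  ⟨fun x => ⟨(x : ℝ) ^ ((q : ℚ) : ℝ), by
      obtain ⟨x, hx0, hx1⟩ := x
      have hq : (0 : ℝ) < ((q : ℚ) : ℝ) := by exact_mod_cast q.2
      exact ⟨Real.rpow_nonneg hx0 _, Real.rpow_le_one hx0 hx1 hq.le⟩⟩, by
    apply Continuous.subtype_mk
    have hq : (0 : ℝ) < ((q : ℚ) : ℝ) := by exact_mod_cast q.2
    exact continuous_subtype_val.rpow_const fun _ => Or.inr hq.le⟩

/-- The point `0` of `[0, 1]`. -/
def z01 : ↥I01 := ⟨0, by constructor <;> norm_num⟩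

/-- The point `1` of `[0, 1]`. -/
def o01 : ↥I01 := ⟨1, by constructor <;> norm_num⟩

/-- For the action of the group `ℚ₊` of positive rationals on `K = [0,1]` by
`q • x = x ^ q` and the induced representation `π` on `C([0,1])`:
(1) the invariant functions `C(K)_π` are exactly the constants;
(2) both `Y₁ = {φ : φ 0 = 0}` and `Y₂ = {φ : φ 1 = 0}` are closed `π(ℚ₊)`-invariant
subspaces with `C(K) = C(K)_π ⊕ Yᵢ` (every `φ` is uniquely a constant plus an element
of `Yᵢ`); and (3) `Y₁ ≠ Y₂`. In particular a `π(G)`-invariant complement of the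
subspace of invariant vectors need not be unique. -/
theorem qpos_action_on_unit_interval_two_invariant_complements :
    (∀ φ : C(↥I01, ℝ),
      (∀ q : {q : ℚ // 0 < q}, φ.comp (powMap q) = φ) → ∃ c : ℝ, ∀ x : ↥I01, φ x = c) ∧
    (IsClosed {φ : C(↥I01, ℝ) | φ z01 = 0} ∧
      (∀ φ : C(↥I01, ℝ), φ z01 = 0 →
        ∀ q : {q : ℚ // 0 < q}, (φ.comp (powMap q)) z01 = 0) ∧
      (∀ φ : C(↥I01, ℝ), ∃! p : ℝ × C(↥I01, ℝ),
        p.2 z01 = 0 ∧ φ = ContinuousMap.const (↥I01) p.1 + p.2)) ∧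
    (IsClosed {φ : C(↥I01, ℝ) | φ o01 = 0} ∧
      (∀ φ : C(↥I01, ℝ), φ o01 = 0 →
        ∀ q : {q : ℚ // 0 < q}, (φ.comp (powMap q)) o01 = 0) ∧
      (∀ φ : C(↥I01, ℝ), ∃! p : ℝ × C(↥I01, ℝ),
        p.2 o01 = 0 ∧ φ = ContinuousMap.const (↥I01) p.1 + p.2)) ∧
    {φ : C(↥I01, ℝ) | φ z01 = 0} ≠ {φ : C(↥I01, ℝ) | φ o01 = 0} := by

  have hval : ∀ (q : {q : ℚ // 0 < q}) (x : ↥I01),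
      ((powMap q x : ↥I01) : ℝ) = (x : ℝ) ^ (((q : ℚ) : ℝ)) := fun q x => rfl
  have hz : ∀ q : {q : ℚ // 0 < q}, powMap q z01 = z01 := by
    intro q
    have hq : ((q : ℚ) : ℝ) ≠ 0 := by
      have : (0 : ℝ) < ((q : ℚ) : ℝ) := by exact_mod_cast q.2
      exact ne_of_gt this
    apply Subtype.ext
    show ((0:ℝ)) ^ (((q : ℚ) : ℝ)) = 0
    exact Real.zero_rpow hq
  have ho : ∀ q : {q : ℚ // 0 < q}, powMap q o01 = o01 := by
    intro q
    apply Subtype.ext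
    show ((1:ℝ)) ^ (((q : ℚ) : ℝ)) = 1
    exact Real.one_rpow _
  have hdecomp : ∀ (pt : ↥I01) (φ : C(↥I01, ℝ)), ∃! p : ℝ × C(↥I01, ℝ),
      p.2 pt = 0 ∧ φ = ContinuousMap.const (↥I01) p.1 + p.2 := by
    intro pt φ
    refine ⟨(φ pt, φ - ContinuousMap.const (↥I01) (φ pt)), ⟨by simp, by ext x; simp⟩, ?_⟩
    rintro ⟨c, ψ⟩ ⟨hψ, hφ⟩
    have hc : c = φ pt := by
      have := congrArg (fun f : C(↥I01, ℝ) => f pt) hφ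
      simp [hψ] at this
      simpa using this.symm
    have hψ' : ψ = φ - ContinuousMap.const (↥I01) (φ pt) := by
      ext x
      have hx := congrArg (fun f : C(↥I01, ℝ) => f x) hφ
      simp at hx ⊢
      rw [hx, hc]; ring
    exact Prod.ext hc hψ' 
  refine ⟨?_, ⟨?_, ?_, hdecomp z01⟩, ⟨?_, ?_, hdecomp o01⟩, ?_⟩
  · -- invariant functions are constant
    intro φ hφ
    refine ⟨φ o01, fun x => ?_⟩
    have key : ∀ y : ↥I01, 0 < (y : ℝ) → φ y = φ o01 := by
      intro y hy
      set seq : ℕ → ↥I01 := fun n => powMap ⟨((n:ℚ)+1)⁻¹, by positivity⟩ y with hseq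
      have hconst : ∀ n, φ (seq n) = φ y := by
        intro n
        exact congrArg (fun f : C(↥I01, ℝ) => f y) (hφ ⟨((n:ℚ)+1)⁻¹, by positivity⟩)
      have htd : Filter.Tendsto seq Filter.atTop (nhds o01) := by
        rw [tendsto_subtype_rng]
        have h1 : ∀ n : ℕ, ((seq n : ↥I01) : ℝ) = (y : ℝ) ^ ((1:ℝ)/(n+1)) := by
          intro n
          rw [hseq, hval]
          congr 1
          push_cast
          ring
        simp only [h1]
        have h0 : Filter.Tendsto (fun n : ℕ => (1:ℝ)/(n+1)) Filter.atTop (nhds 0) :=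
          tendsto_one_div_add_atTop_nhds_zero_nat
        have := (Real.continuousAt_const_rpow (ne_of_gt hy)).tendsto.comp h0
        show Filter.Tendsto (fun n : ℕ => (y : ℝ) ^ ((1:ℝ)/(n+1))) Filter.atTop (nhds ((o01 : ↥I01) : ℝ))
        have ho1 : ((o01 : ↥I01) : ℝ) = 1 := rfl
        rw [ho1]
        simpa [Function.comp_def] using this
      have h2 : Filter.Tendsto (fun n => φ (seq n)) Filter.atTop (nhds (φ o01)) :=
        (φ.continuous.tendsto o01).comp htd
      have h3 : Filter.Tendsto (fun _ : ℕ => φ y) Filter.atTop (nhds (φ o01)) := by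
        simpa [hconst] using h2
      exact (tendsto_nhds_unique h3 tendsto_const_nhds).symm
    rcases lt_or_eq_of_le x.2.1 with hx | hx
    · exact key x hx
    · have hx0 : x = z01 := Subtype.ext hx.symm
      subst hx0
      set seq : ℕ → ↥I01 := fun n => ⟨(1/2 : ℝ) ^ (n+1), by
        constructor
        · positivity
        · exact pow_le_one₀ (by norm_num) (by norm_num)⟩ with hseq
      have hconst : ∀ n, φ (seq n) = φ o01 := fun n => key _ (by positivity)
      have htd : Filter.Tendsto seq Filter.atTop (nhds z01) := by
        rw [tendsto_subtype_rng]
        have hz1 : ((z01 : ↥I01) : ℝ) = 0 := rfl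
        rw [hz1]
        have : Filter.Tendsto (fun n : ℕ => (1/2 : ℝ) ^ n) Filter.atTop (nhds 0) :=
          tendsto_pow_atTop_nhds_zero_of_lt_one (by norm_num) (by norm_num)
        exact this.comp (Filter.tendsto_add_atTop_nat 1)
      have h2 : Filter.Tendsto (fun n => φ (seq n)) Filter.atTop (nhds (φ z01)) :=
        (φ.continuous.tendsto z01).comp htd
      have h3 : Filter.Tendsto (fun _ : ℕ => φ o01) Filter.atTop (nhds (φ z01)) := by
        simpa [hconst] using h2
      exact tendsto_nhds_unique h3 tendsto_const_nhds
  · exact isClosed_singleton.preimage (continuous_eval_const z01)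
  · intro φ hφ q
    simp [ContinuousMap.comp_apply, hz q, hφ]
  · exact isClosed_singleton.preimage (continuous_eval_const o01)
  · intro φ hφ q
    simp [ContinuousMap.comp_apply, ho q, hφ]
  · intro h
    have hmem : (⟨Subtype.val, continuous_subtype_val⟩ : C(↥I01, ℝ)) ∈
        {φ : C(↥I01, ℝ) | φ z01 = 0} := rfl
    rw [h] at hmem
    have : ((1 : ℝ)) = 0 := hmem
    norm_num at this
end
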